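/- arXiv:2111.05720 — 5 statements merged into one kernel-verified Lean document; each statement's English description precedes it below -/
import Mathlib

section
/- Let b_n denote the number of simple graphs on the labeled vertex set {1,…,n} in which every vertex has degree exactly 2. Then b_0 = 1, b_1 = b_2 = 0, and for every n ≥ 3, b_n = (n−1)·b_{n−1} + C(n−1,2)·b_{n−3}, where C(n−1,2) = (n−1)(n−2)/2. -/
open scoped Classical

/-- Two-regular graphs on a vertex type. -/
abbrev Treg (V : Type*) : Type _ :=
  {G : SimpleGraph V // ∀ v, Nat.card {w : V // G.Adj v w} = 2}

lemma natcard_adj_eq_ncard {V : Type*} (G : SimpleGraph V) (v : V) :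
    Nat.card {w : V // G.Adj v w} = Set.ncard {w | G.Adj v w} :=
  Nat.card_coe_set_eq _

/-- transfer along an equiv -/
noncomputable def tregEquiv {V W : Type*} (e : V ≃ W) : Treg V ≃ Treg W where
  toFun G := ⟨G.1.comap e.symm, fun v => by
    simp only [SimpleGraph.comap_adj]
    rw [Nat.card_congr (Equiv.subtypeEquiv e.symm fun a => Iff.rfl : {w : W // G.1.Adj (e.symm v) (e.symm w)} ≃ {x : V // G.1.Adj (e.symm v) x})]
    exact G.2 _⟩
  invFun G := ⟨G.1.comap e, fun v => by
    simp only [SimpleGraph.comap_adj]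
    rw [Nat.card_congr (Equiv.subtypeEquiv e fun a => Iff.rfl : {w : V // G.1.Adj (e v) (e w)} ≃ {x : W // G.1.Adj (e v) x})]
    exact G.2 _⟩
  left_inv G := by
    apply Subtype.ext
    ext a b
    simp [SimpleGraph.comap]
  right_inv G := by
    apply Subtype.ext
    ext a b
    simp [SimpleGraph.comap]

lemma card_treg_congr {V W : Type*} (e : V ≃ W) : Nat.card (Treg V) = Nat.card (Treg W) :=
  Nat.card_congr (tregEquiv e)

lemma treg_zero : Nat.card (Treg (Fin 0)) = 1 := by
  have : Unique (Treg (Fin 0)) :=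
    { default := ⟨⊥, fun v => v.elim0⟩
      uniq := fun G => by
        apply Subtype.ext
        ext a b
        exact a.elim0 }
  exact Nat.card_unique

lemma treg_one : Nat.card (Treg (Fin 1)) = 0 := by
  have : IsEmpty (Treg (Fin 1)) := ⟨fun G => by
    have h := G.2 0
    rw [natcard_adj_eq_ncard] at h
    have hsub : {w : Fin 1 | G.1.Adj 0 w} ⊆ (∅ : Set (Fin 1)) := by
      intro w hw
      have : w = 0 := Subsingleton.elim _ _
      subst this
      exact (G.1.irrefl hw).elim
    have := Set.ncard_le_ncard hsub Set.finite_empty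
    simp at this
    omega⟩
  exact Nat.card_of_isEmpty

lemma treg_two : Nat.card (Treg (Fin 2)) = 0 := by
  have : IsEmpty (Treg (Fin 2)) := ⟨fun G => by
    have h := G.2 0
    rw [natcard_adj_eq_ncard] at h
    have hsub : {w : Fin 2 | G.1.Adj 0 w} ⊆ ({1} : Set (Fin 2)) := by
      intro w hw
      simp only [Set.mem_setOf_eq] at hw
      have hw0 : w ≠ 0 := fun e => by subst e; exact G.1.irrefl hw
      fin_cases w <;> simp_all
    have := Set.ncard_le_ncard hsub (Set.finite_singleton 1)
    rw [Set.ncard_singleton] at this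
    omega⟩
  exact Nat.card_of_isEmpty


section Helpers

variable {α : Type*}

lemma set_eq_pair_of_ncard {s : Set α} {a b : α} (hfin : s.Finite) (hs : s.ncard = 2)
    (ha : a ∈ s) (hb : b ∈ s) (hab : a ≠ b) : s = {a, b} := by
  refine (Set.eq_of_subset_of_ncard_le ?_ ?_ hfin).symm
  · intro x hx
    rcases hx with h | h
    · exact h ▸ ha
    · exact h ▸ hb
  · rw [hs, Set.ncard_pair hab]

lemma sym2_eq_of_mem_iff {p : Sym2 α} {a b : α} (hab : a ≠ b)
    (h : ∀ x, x ∈ p ↔ (x = a ∨ x = b)) : p = s(a, b) := by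
  induction p with
  | _ c d =>
    have hc := (h c).mp (Sym2.mem_mk_left c d)
    have hd := (h d).mp (Sym2.mem_mk_right c d)
    have hb' := (h b).mpr (Or.inr rfl)
    have ha' := (h a).mpr (Or.inl rfl)
    rw [Sym2.mem_iff] at hb' ha'
    rw [Sym2.eq_iff]
    rcases hc with rfl | rfl
    · rcases hb' with rfl | rfl
      · exact absurd rfl hab
      · exact Or.inl ⟨rfl, rfl⟩
    · rcases ha' with rfl | rfl
      · exact absurd rfl hab
      · exact Or.inr ⟨rfl, rfl⟩

end Helpers

lemma sym2_rep (e : Sym2 α) : ∃ a b : α, e = s(a, b) :=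
  e.ind (fun a b => ⟨a, b, rfl⟩)

section Sub

variable {V : Type*} (z : V)

/-- predicate: `z` lies in a triangle -/
def TriP (G : SimpleGraph V) : Prop := ∃ a b, G.Adj z a ∧ G.Adj z b ∧ G.Adj a b

/-- subdivision of the edge `e` of `H` by the new vertex `z`. -/
def subGraph (H : SimpleGraph {v : V // v ≠ z}) (e : Sym2 {v : V // v ≠ z}) :
    SimpleGraph V where
  Adj a b :=
    (∃ (ha : a ≠ z) (hb : b ≠ z), H.Adj ⟨a, ha⟩ ⟨b, hb⟩ ∧
        s((⟨a, ha⟩ : {v : V // v ≠ z}), ⟨b, hb⟩) ≠ e)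
    ∨ (a = z ∧ ∃ hb : b ≠ z, (⟨b, hb⟩ : {v : V // v ≠ z}) ∈ e)
    ∨ (b = z ∧ ∃ ha : a ≠ z, (⟨a, ha⟩ : {v : V // v ≠ z}) ∈ e)
  symm := by
    constructor
    intro a b h
    rcases h with ⟨ha, hb, h1, h2⟩ | ⟨h1, h2⟩ | ⟨h1, h2⟩
    · exact Or.inl ⟨hb, ha, h1.symm, by rwa [Sym2.eq_swap]⟩
    · exact Or.inr (Or.inr ⟨h1, h2⟩)
    · exact Or.inr (Or.inl ⟨h1, h2⟩)
  loopless := by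
    constructor
    intro a h
    rcases h with ⟨ha, hb, h1, _⟩ | ⟨h1, hb, _⟩ | ⟨h1, ha, _⟩
    · exact H.irrefl h1
    · exact hb h1
    · exact ha h1

variable (H : SimpleGraph {v : V // v ≠ z})

lemma subGraph_nbhd_z (u v : {v : V // v ≠ z}) :
    {w | (subGraph z H s(u, v)).Adj z w} = {(u : V), (v : V)} := by
  ext w
  simp only [Set.mem_setOf_eq, Set.mem_insert_iff, Set.mem_singleton_iff]
  constructor
  · rintro (⟨hz, _, _, _⟩ | ⟨_, hw, hmem⟩ | ⟨hw, hz, _⟩)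
    · exact absurd rfl hz
    · rw [Sym2.mem_iff] at hmem
      rcases hmem with h | h
      · exact Or.inl (congrArg Subtype.val h)
      · exact Or.inr (congrArg Subtype.val h)
    · exact absurd rfl hz
  · rintro (rfl | rfl)
    · exact Or.inr (Or.inl ⟨rfl, u.2, by simp⟩)
    · exact Or.inr (Or.inl ⟨rfl, v.2, by simp⟩)

lemma subGraph_nbhd_nmem (e : Sym2 {v : V // v ≠ z}) (c : {v : V // v ≠ z}) (hc : c ∉ e) :
    {w | (subGraph z H e).Adj (↑c) w} = Subtype.val '' {d | H.Adj c d} := by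
  ext w
  simp only [Set.mem_setOf_eq, Set.mem_image]
  constructor
  · rintro (⟨ha, hb, h1, h2⟩ | ⟨hz, _⟩ | ⟨hw, ha, hmem⟩)
    · exact ⟨⟨w, hb⟩, by simpa using h1, rfl⟩
    · exact absurd hz c.2
    · exact absurd (by simpa using hmem) hc
  · rintro ⟨d, hd, rfl⟩
    refine Or.inl ⟨c.2, d.2, by simpa using hd, fun h => hc ?_⟩
    rw [← h]
    simp


lemma subGraph_nbhd_mem (u v : {v : V // v ≠ z}) :
    {w | (subGraph z H s(u, v)).Adj (↑u) w} =
      insert z (Subtype.val '' ({d | H.Adj u d} \ {v})) := by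
  ext w
  simp only [Set.mem_setOf_eq, Set.mem_insert_iff, Set.mem_image, Set.mem_diff,
    Set.mem_singleton_iff]
  constructor
  · rintro (⟨ha, hb, h1, h2⟩ | ⟨hz, _⟩ | ⟨hw, _, _⟩)
    · refine Or.inr ⟨⟨w, hb⟩, ⟨by simpa using h1, fun hd => h2 ?_⟩, rfl⟩
      subst hd
      congr 1
    · exact absurd hz u.2
    · exact Or.inl hw
  · rintro (rfl | ⟨d, ⟨hd1, hd2⟩, rfl⟩)
    · exact Or.inr (Or.inr ⟨rfl, u.2, by simp⟩)
    · refine Or.inl ⟨u.2, d.2, by simpa using hd1, fun h => hd2 ?_⟩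
      have : (⟨↑u, u.2⟩ : {v : V // v ≠ z}) = u := Subtype.ext rfl
      rw [this] at h
      exact (Sym2.congr_right.mp h)


lemma sym2_eq_of_two_mem {α : Type*} {e : Sym2 α} {a b : α} (hab : a ≠ b)
    (ha : a ∈ e) (hb : b ∈ e) : s(a, b) = e := by
  obtain ⟨u, v, rfl⟩ := sym2_rep e
  rw [Sym2.mem_iff] at ha hb
  rw [Sym2.eq_iff]
  rcases ha with rfl | rfl <;> rcases hb with rfl | rfl <;> tauto

lemma subGraph_deg [Finite V] (hH : ∀ x, ({y | H.Adj x y} : Set _).ncard = 2)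
    {e : Sym2 {v : V // v ≠ z}} (he : e ∈ H.edgeSet) :
    ∀ w, ({x | (subGraph z H e).Adj w x}).ncard = 2 := by
  obtain ⟨u, v, rfl⟩ := sym2_rep e
  have huv : H.Adj u v := H.mem_edgeSet.mp he
  have hne : u ≠ v := H.ne_of_adj huv
  intro w
  by_cases hw : w = z
  · subst hw
    rw [subGraph_nbhd_z]
    exact Set.ncard_pair (fun h => hne (Subtype.ext h))
  · set c : {v : V // v ≠ z} := ⟨w, hw⟩ with hc
    have hwc : w = ↑c := rfl
    rw [hwc]
    by_cases hcu : c = u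
    · subst hcu
      rw [subGraph_nbhd_mem]
      have hz : z ∉ Subtype.val '' ({d | H.Adj c d} \ {v}) := by
        rintro ⟨d, _, hdz⟩
        exact d.2 hdz
      rw [Set.ncard_insert_of_notMem hz (Set.toFinite _),
        Set.ncard_image_of_injective _ Subtype.val_injective,
        Set.ncard_diff_singleton_of_mem (show v ∈ {d | H.Adj c d} from huv), hH c]
    · by_cases hcv : c = v
      · subst hcv
        rw [Sym2.eq_swap, subGraph_nbhd_mem]
        have hz : z ∉ Subtype.val '' ({d | H.Adj c d} \ {u}) := by
          rintro ⟨d, _, hdz⟩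
          exact d.2 hdz
        rw [Set.ncard_insert_of_notMem hz (Set.toFinite _),
          Set.ncard_image_of_injective _ Subtype.val_injective,
          Set.ncard_diff_singleton_of_mem (show u ∈ {d | H.Adj c d} from huv.symm), hH c]
      · rw [subGraph_nbhd_nmem _ _ _ _ (by rw [Sym2.mem_iff]; tauto),
          Set.ncard_image_of_injective _ Subtype.val_injective, hH c]

lemma subGraph_noTri {e : Sym2 {v : V // v ≠ z}} :
    ¬ TriP z (subGraph z H e) := by
  rintro ⟨a, b, h1, h2, h3⟩
  have ha : ∃ h : a ≠ z, (⟨a, h⟩ : {v : V // v ≠ z}) ∈ e := by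
    rcases h1 with ⟨hz, _, _, _⟩ | ⟨_, h⟩ | ⟨hz, h, _⟩
    · exact absurd rfl hz
    · exact h
    · exact absurd rfl h
  have hb : ∃ h : b ≠ z, (⟨b, h⟩ : {v : V // v ≠ z}) ∈ e := by
    rcases h2 with ⟨hz, _, _, _⟩ | ⟨_, h⟩ | ⟨hz, h, _⟩
    · exact absurd rfl hz
    · exact h
    · exact absurd rfl h
  obtain ⟨ha', hae⟩ := ha
  obtain ⟨hb', hbe⟩ := hb
  rcases h3 with ⟨ha2, hb2, hAdj, hne⟩ | ⟨hz, _⟩ | ⟨hz, _⟩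
  · refine hne (sym2_eq_of_two_mem (fun h => H.ne_of_adj hAdj ?_) (by exact hae) (by exact hbe))
    exact h
  · exact absurd hz ha'
  · exact absurd hz hb'


lemma subGraph_adj_z {e : Sym2 {v : V // v ≠ z}} (x : {v : V // v ≠ z}) :
    (subGraph z H e).Adj z ↑x ↔ x ∈ e := by
  constructor
  · rintro (⟨hz, _, _, _⟩ | ⟨_, hb, hm⟩ | ⟨hx, _, _⟩)
    · exact absurd rfl hz
    · exact hm
    · exact absurd hx x.2
  · intro hx
    exact Or.inr (Or.inl ⟨rfl, x.2, hx⟩)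

lemma subGraph_adj_nz {e : Sym2 {v : V // v ≠ z}} (x y : {v : V // v ≠ z}) :
    (subGraph z H e).Adj ↑x ↑y ↔ (H.Adj x y ∧ s(x, y) ≠ e) := by
  constructor
  · rintro (⟨ha, hb, h1, h2⟩ | ⟨hz, _⟩ | ⟨hz, _⟩)
    · exact ⟨h1, h2⟩
    · exact absurd hz x.2
    · exact absurd hz y.2
  · rintro ⟨h1, h2⟩
    exact Or.inl ⟨x.2, y.2, h1, h2⟩

end Sub

section SubBij

variable {V : Type*} [Finite V] (z : V)

lemma val_image_setOf (s : Set V) :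
    Subtype.val '' {y : {v : V // v ≠ z} | ↑y ∈ s} = s \ {z} := by
  ext w
  constructor
  · rintro ⟨y, hy, rfl⟩
    exact ⟨hy, y.2⟩
  · rintro ⟨hw, hwz⟩
    exact ⟨⟨w, hwz⟩, hw, rfl⟩

noncomputable def subdivide (p : Σ H : Treg {v : V // v ≠ z}, ↥H.1.edgeSet) :
    {G : Treg V // ¬ TriP z G.1} :=
  ⟨⟨subGraph z p.1.1 p.2.1, fun w => by
      rw [natcard_adj_eq_ncard]
      exact subGraph_deg z p.1.1
        (fun x => by rw [← natcard_adj_eq_ncard]; exact p.1.2 x) p.2.2 w⟩,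
    subGraph_noTri z p.1.1⟩

theorem subdivide_injective : Function.Injective (subdivide z) := by
  rintro ⟨H, e, he⟩ ⟨H', e', he'⟩ h
  have hG : subGraph z H.1 e = subGraph z H'.1 e' := congrArg (fun q => q.1.1) h
  have hmem : ∀ x : {v : V // v ≠ z}, x ∈ e ↔ x ∈ e' := by
    intro x
    rw [← subGraph_adj_z z H.1, ← subGraph_adj_z z H'.1, hG]
  have hee : e = e' := by
    obtain ⟨u, v, rfl⟩ := sym2_rep e
    have hne : u ≠ v := by
      intro huv
      exact H.1.irrefl (H.1.mem_edgeSet.mp (show s(u,u) ∈ H.1.edgeSet from by rw [← huv] at he; exact he))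
    exact (sym2_eq_of_mem_iff hne (fun x => by rw [← hmem x, Sym2.mem_iff])).symm
  subst hee
  have hH : H = H' := by
    apply Subtype.ext
    ext x y
    by_cases hxy : s(x, y) = e
    · exact iff_of_true (H.1.mem_edgeSet.mp (by rw [hxy]; exact he))
        (H'.1.mem_edgeSet.mp (by rw [hxy]; exact he'))
    · have h1 := subGraph_adj_nz z H.1 (e := e) x y
      have h2 := subGraph_adj_nz z H'.1 (e := e) x y
      rw [hG] at h1
      constructor
      · intro hA
        exact (h2.mp (h1.mpr ⟨hA, hxy⟩)).1
      · intro hA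
        exact (h1.mp (h2.mpr ⟨hA, hxy⟩)).1
  subst hH
  exact Sigma.ext rfl (heq_of_eq (Subtype.ext rfl))

theorem subdivide_surjective : Function.Surjective (subdivide z) := by
  rintro ⟨⟨G, hdeg⟩, hnt⟩
  have hz2 : ({w | G.Adj z w}).ncard = 2 := by
    rw [← natcard_adj_eq_ncard]; exact hdeg z
  obtain ⟨u, v, huv, hset⟩ := Set.ncard_eq_two.mp hz2
  have hchar : ∀ w, G.Adj z w ↔ (w = u ∨ w = v) := by
    intro w
    constructor
    · intro h
      have : w ∈ ({u, v} : Set V) := hset ▸ h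
      simpa using this
    · rintro (rfl | rfl)
      · have : w ∈ ({w, v} : Set V) := by simp
        rw [← hset] at this; exact this
      · have : w ∈ ({u, w} : Set V) := by simp
        rw [← hset] at this; exact this
  have hu : G.Adj z u := (hchar u).mpr (Or.inl rfl)
  have hv : G.Adj z v := (hchar v).mpr (Or.inr rfl)
  have huz : u ≠ z := fun h => G.irrefl (h ▸ hu)
  have hvz : v ≠ z := fun h => G.irrefl (h ▸ hv)
  have hnadj : ¬ G.Adj u v := fun h => hnt ⟨u, v, hu, hv, h⟩
  set u' : {x : V // x ≠ z} := ⟨u, huz⟩ with hu'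
  set v' : {x : V // x ≠ z} := ⟨v, hvz⟩ with hv'
  have hu'v' : u' ≠ v' := fun h => huv (congrArg Subtype.val h)
  set H : SimpleGraph {x : V // x ≠ z} :=
    { Adj := fun x y => G.Adj ↑x ↑y ∨ (x = u' ∧ y = v') ∨ (x = v' ∧ y = u')
      symm := by
        constructor
        rintro x y (h | ⟨rfl, rfl⟩ | ⟨rfl, rfl⟩)
        · exact Or.inl h.symm
        · exact Or.inr (Or.inr ⟨rfl, rfl⟩)
        · exact Or.inr (Or.inl ⟨rfl, rfl⟩)
      loopless := by
        constructor
        rintro x (h | ⟨rfl, h⟩ | ⟨rfl, h⟩)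
        · exact G.irrefl h
        · exact hu'v' h
        · exact hu'v' h.symm } with hHdef
  have hAdjH : ∀ x y, H.Adj x y ↔
      (G.Adj ↑x ↑y ∨ (x = u' ∧ y = v') ∨ (x = v' ∧ y = u')) := fun x y => Iff.rfl
  -- z is not a G-neighbor of any x ∉ {u', v'}
  have hznb : ∀ x : {x : V // x ≠ z}, x ≠ u' → x ≠ v' → ¬ G.Adj ↑x z := by
    intro x hxu hxv h
    rcases (hchar ↑x).mp h.symm with h' | h'
    · exact hxu (Subtype.ext h')
    · exact hxv (Subtype.ext h')
  have hreg : ∀ x, Nat.card {y // H.Adj x y} = 2 := by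
    intro x
    rw [natcard_adj_eq_ncard]
    have himg : ∀ c : V, Subtype.val '' {y : {t : V // t ≠ z} | G.Adj c ↑y}
        = {w | G.Adj c w} \ {z} := fun c => val_image_setOf z {w | G.Adj c w}
    have hncard : ∀ c : V, G.Adj c z →
        ({y : {t : V // t ≠ z} | G.Adj c ↑y}).ncard = 1 := by
      intro c hc
      have h1 : ({y : {t : V // t ≠ z} | G.Adj c ↑y}).ncard
          = ({w | G.Adj c w} \ {z} : Set V).ncard := by
        rw [← himg c, Set.ncard_image_of_injective _ Subtype.val_injective]
      rw [h1, Set.ncard_diff_singleton_of_mem (show z ∈ {w | G.Adj c w} from hc)]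
      have h2 : ({w | G.Adj c w}).ncard = 2 := by
        rw [← natcard_adj_eq_ncard]; exact hdeg c
      omega
    by_cases hxu : x = u'
    · rw [hxu]
      have hs : {y : {t : V // t ≠ z} | H.Adj u' y}
          = insert v' {y : {t : V // t ≠ z} | G.Adj u ↑y} := by
        ext y
        simp only [Set.mem_setOf_eq, hAdjH, Set.mem_insert_iff]
        constructor
        · rintro (h | ⟨-, rfl⟩ | ⟨h, -⟩)
          · exact Or.inr h
          · exact Or.inl rfl
          · exact absurd h hu'v'
        · rintro (rfl | h)
          · exact Or.inr (Or.inl ⟨trivial, rfl⟩)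
          · exact Or.inl h
      have hvnm : v' ∉ {y : {t : V // t ≠ z} | G.Adj u ↑y} := hnadj
      rw [hs, Set.ncard_insert_of_notMem hvnm (Set.toFinite _), hncard u hu.symm]
    · by_cases hxv : x = v'
      · rw [hxv]
        have hs : {y : {t : V // t ≠ z} | H.Adj v' y}
            = insert u' {y : {t : V // t ≠ z} | G.Adj v ↑y} := by
          ext y
          simp only [Set.mem_setOf_eq, hAdjH, Set.mem_insert_iff]
          constructor
          · rintro (h | ⟨h, -⟩ | ⟨-, rfl⟩)
            · exact Or.inr h
            · exact absurd h.symm hu'v'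
            · exact Or.inl rfl
          · rintro (rfl | h)
            · exact Or.inr (Or.inr ⟨trivial, rfl⟩)
            · exact Or.inl h
        have hunm : u' ∉ {y : {t : V // t ≠ z} | G.Adj v ↑y} := fun h => hnadj h.symm
        rw [hs, Set.ncard_insert_of_notMem hunm (Set.toFinite _), hncard v hv.symm]
      · have hs : {y : {t : V // t ≠ z} | H.Adj x y}
            = {y : {t : V // t ≠ z} | G.Adj ↑x ↑y} := by
          ext y
          simp only [Set.mem_setOf_eq, hAdjH]
          constructor
          · rintro (h | ⟨h, -⟩ | ⟨h, -⟩)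
            · exact h
            · exact absurd h hxu
            · exact absurd h hxv
          · exact fun h => Or.inl h
        have h1 : ({y : {t : V // t ≠ z} | G.Adj ↑x ↑y}).ncard
            = ({w | G.Adj ↑x w} \ {z} : Set V).ncard := by
          rw [← himg ↑x, Set.ncard_image_of_injective _ Subtype.val_injective]
        rw [hs, h1, Set.diff_singleton_eq_self
            (show z ∉ {w | G.Adj (↑x) w} from fun h => hznb x hxu hxv h),
          ← natcard_adj_eq_ncard]
        exact hdeg ↑x
  have he : s(u', v') ∈ H.edgeSet := H.mem_edgeSet.mpr (Or.inr (Or.inl ⟨rfl, rfl⟩))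
  -- graph equality
  have hzc : ∀ b (hbz : b ≠ z), ((subGraph z H s(u', v')).Adj z b ↔ G.Adj z b) := by
    intro b hbz
    rw [show b = ↑(⟨b, hbz⟩ : {x : V // x ≠ z}) from rfl, subGraph_adj_z, Sym2.mem_iff,
      hchar b]
    constructor
    · rintro (h | h)
      · exact Or.inl (congrArg Subtype.val h)
      · exact Or.inr (congrArg Subtype.val h)
    · rintro (h | h)
      · exact Or.inl (Subtype.ext h)
      · exact Or.inr (Subtype.ext h)
  have hGeq : subGraph z H s(u', v') = G := by
    ext a b
    by_cases haz : a = z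
    · rw [haz]
      by_cases hbz : b = z
      · rw [hbz]
        exact iff_of_false (fun h => (subGraph z H s(u', v')).irrefl h) (fun h => G.irrefl h)
      · exact hzc b hbz
    · by_cases hbz : b = z
      · rw [hbz, (subGraph z H s(u', v')).adj_comm, G.adj_comm]
        exact hzc a haz
      · rw [show a = ↑(⟨a, haz⟩ : {x : V // x ≠ z}) from rfl,
          show b = ↑(⟨b, hbz⟩ : {x : V // x ≠ z}) from rfl, subGraph_adj_nz]
        set x : {x : V // x ≠ z} := ⟨a, haz⟩
        set y : {x : V // x ≠ z} := ⟨b, hbz⟩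
        by_cases hxy : s(x, y) = s(u', v')
        · refine iff_of_false (fun h => h.2 hxy) ?_
          rcases Sym2.eq_iff.mp hxy with ⟨h1, h2⟩ | ⟨h1, h2⟩
          · rw [h1, h2]; exact hnadj
          · rw [h1, h2]; exact fun h => hnadj h.symm
        · constructor
          · rintro ⟨h, -⟩
            rcases (hAdjH x y).mp h with h' | ⟨h1, h2⟩ | ⟨h1, h2⟩
            · exact h'
            · exact absurd (by rw [h1, h2]) hxy
            · exact absurd (by rw [h1, h2]; exact Sym2.eq_swap) hxy
          · intro h
            exact ⟨(hAdjH x y).mpr (Or.inl h), hxy⟩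
  refine ⟨⟨⟨H, hreg⟩, ⟨s(u', v'), he⟩⟩, ?_⟩
  apply Subtype.ext
  apply Subtype.ext
  exact hGeq


lemma natcard_adj_eq_degree {W : Type*} [Fintype W] (G : SimpleGraph W)
    [DecidableRel G.Adj] (v : W) :
    Nat.card {w // G.Adj v w} = G.degree v := by
  rw [show {w // G.Adj v w} = ↥(G.neighborSet v) from rfl, Nat.card_eq_fintype_card,
    SimpleGraph.card_neighborSet_eq_degree]

lemma treg_edge_card {W : Type*} [Fintype W] (H : Treg W) :
    Nat.card ↥H.1.edgeSet = Fintype.card W := by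
  letI : DecidableEq W := Classical.decEq W
  letI : DecidableRel H.1.Adj := Classical.decRel _
  have hs := SimpleGraph.sum_degrees_eq_twice_card_edges H.1
  have hdeg : ∀ v, H.1.degree v = 2 := fun v => by
    rw [← natcard_adj_eq_degree]; exact H.2 v
  rw [Finset.sum_congr rfl (fun v _ => hdeg v), Finset.sum_const, smul_eq_mul] at hs
  have hcu : (Finset.univ : Finset W).card = Fintype.card W := Finset.card_univ
  have h5 : Nat.card ↥H.1.edgeSet = H.1.edgeFinset.card := by
    rw [SimpleGraph.edgeFinset_card, Nat.card_eq_fintype_card]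
  omega

lemma count_caseB {V : Type*} [Fintype V] (z : V) :
    Nat.card {G : Treg V // ¬ TriP z G.1}
      = Nat.card (Treg {v : V // v ≠ z}) * (Fintype.card V - 1) := by
  rw [← Nat.card_eq_of_bijective (subdivide z)
    ⟨subdivide_injective z, subdivide_surjective z⟩]
  letI : Fintype (Treg {v : V // v ≠ z}) := Fintype.ofFinite _
  letI : ∀ H : Treg {v : V // v ≠ z}, Fintype ↥H.1.edgeSet := fun H => Fintype.ofFinite _
  have hVp : Fintype.card {v : V // v ≠ z} = Fintype.card V - 1 := by
    rw [Fintype.card_subtype_compl, Fintype.card_subtype_eq]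
  rw [Nat.card_eq_fintype_card, Fintype.card_sigma]
  have : ∀ H : Treg {v : V // v ≠ z}, Fintype.card ↥H.1.edgeSet = Fintype.card V - 1 := by
    intro H
    rw [← Nat.card_eq_fintype_card, treg_edge_card, hVp]
  rw [Finset.sum_congr rfl (fun H _ => this H), Finset.sum_const, smul_eq_mul,
    Finset.card_univ, Nat.card_eq_fintype_card]

end SubBij

section Tri

variable {V : Type*} (z : V)

/-- membership in the triangle vertex set `{z} ∪ p` -/
def inS (p : Sym2 {v : V // v ≠ z}) (a : V) : Prop :=
  a = z ∨ ∃ h : a ≠ z, (⟨a, h⟩ : {v : V // v ≠ z}) ∈ p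

/-- pack a vertex outside the triangle into the complement subtype -/
def pk (p : Sym2 {v : V // v ≠ z}) (a : V) (ha : ¬ inS z p a) :
    {y : {v : V // v ≠ z} // y ∉ p} :=
  ⟨⟨a, fun h => ha (Or.inl h)⟩, fun hm => ha (Or.inr ⟨_, hm⟩)⟩

lemma not_inS_coe (p : Sym2 {v : V // v ≠ z}) (y : {y : {v : V // v ≠ z} // y ∉ p}) :
    ¬ inS z p ↑↑y := by
  rintro (h | ⟨h', hm⟩)
  · exact (↑y : {v : V // v ≠ z}).2 h
  · exact y.2 hm

/-- the triangle `{z} ∪ p` together with the graph `K` outside of it -/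
def triGraph (p : Sym2 {v : V // v ≠ z}) (K : SimpleGraph {y : {v : V // v ≠ z} // y ∉ p}) :
    SimpleGraph V where
  Adj a b := (inS z p a ∧ inS z p b ∧ a ≠ b) ∨
    (∃ (ha : ¬ inS z p a) (hb : ¬ inS z p b), K.Adj (pk z p a ha) (pk z p b hb))
  symm := by
    constructor
    rintro a b (⟨h1, h2, h3⟩ | ⟨ha, hb, h⟩)
    · exact Or.inl ⟨h2, h1, h3.symm⟩
    · exact Or.inr ⟨hb, ha, h.symm⟩
  loopless := by
    constructor
    rintro a (⟨-, -, h⟩ | ⟨ha, hb, h⟩)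
    · exact h rfl
    · exact K.irrefl h

variable (p : Sym2 {v : V // v ≠ z}) (K : SimpleGraph {y : {v : V // v ≠ z} // y ∉ p})

lemma triGraph_adj_z (x : {v : V // v ≠ z}) :
    (triGraph z p K).Adj z ↑x ↔ x ∈ p := by
  constructor
  · rintro (⟨-, hx, -⟩ | ⟨ha, -, -⟩)
    · rcases hx with h | ⟨h', hm⟩
      · exact absurd h x.2
      · exact hm
    · exact absurd (Or.inl rfl) ha
  · intro hx
    exact Or.inl ⟨Or.inl rfl, Or.inr ⟨x.2, hx⟩, fun h => x.2 h.symm⟩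

lemma triGraph_adj_out (x y : {y : {v : V // v ≠ z} // y ∉ p}) :
    (triGraph z p K).Adj ↑↑x ↑↑y ↔ K.Adj x y := by
  constructor
  · rintro (⟨hx, -, -⟩ | ⟨ha, hb, h⟩)
    · exact absurd hx (not_inS_coe z p x)
    · exact h
  · intro h
    exact Or.inr ⟨not_inS_coe z p x, not_inS_coe z p y, h⟩

lemma inS_iff (u v : {v : V // v ≠ z}) (a : V) :
    inS z s(u, v) a ↔ (a = z ∨ a = ↑u ∨ a = ↑v) := by
  constructor
  · rintro (h | ⟨h', hm⟩)
    · exact Or.inl h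
    · rw [Sym2.mem_iff] at hm
      rcases hm with h | h
      · exact Or.inr (Or.inl (congrArg Subtype.val h))
      · exact Or.inr (Or.inr (congrArg Subtype.val h))
  · rintro (rfl | rfl | rfl)
    · exact Or.inl rfl
    · exact Or.inr ⟨u.2, by simp⟩
    · exact Or.inr ⟨v.2, by simp⟩

lemma setS_eq (u v : {v : V // v ≠ z}) :
    {a | inS z s(u, v) a} = {z, ↑u, ↑v} := by
  ext a
  rw [Set.mem_setOf_eq, inS_iff]
  simp

lemma triGraph_nbhd_inS (a : V) (ha : inS z p a) :
    {w | (triGraph z p K).Adj a w} = {w | inS z p w} \ {a} := by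
  ext w
  simp only [Set.mem_setOf_eq, Set.mem_diff, Set.mem_singleton_iff]
  constructor
  · rintro (⟨-, h2, h3⟩ | ⟨ha', -, -⟩)
    · exact ⟨h2, fun h => h3 (h.symm)⟩
    · exact absurd ha ha'
  · rintro ⟨hw, hwa⟩
    exact Or.inl ⟨ha, hw, fun h => hwa h.symm⟩

lemma triGraph_nbhd_out (x : {y : {v : V // v ≠ z} // y ∉ p}) :
    {w | (triGraph z p K).Adj ↑↑x w}
      = (fun d : {y : {v : V // v ≠ z} // y ∉ p} => (↑↑d : V)) '' {d | K.Adj x d} := by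
  ext w
  simp only [Set.mem_setOf_eq, Set.mem_image]
  constructor
  · rintro (⟨hx, -, -⟩ | ⟨ha, hb, h⟩)
    · exact absurd hx (not_inS_coe z p x)
    · exact ⟨pk z p w hb, h, rfl⟩
  · rintro ⟨d, hd, rfl⟩
    exact Or.inr ⟨not_inS_coe z p x, not_inS_coe z p d, hd⟩

lemma triGraph_deg [Finite V] (hp : ¬ p.IsDiag)
    (hK : ∀ x, ({d | K.Adj x d}).ncard = 2) :
    ∀ w, ({x | (triGraph z p K).Adj w x}).ncard = 2 := by
  obtain ⟨u, v, rfl⟩ := sym2_rep p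
  have huv : u ≠ v := by
    intro h
    exact hp (by rw [h]; exact Sym2.mk_isDiag_iff.mpr rfl)
  have hzu : (z : V) ≠ ↑u := fun h => u.2 h.symm
  have hzv : (z : V) ≠ ↑v := fun h => v.2 h.symm
  have huvc : (↑u : V) ≠ ↑v := fun h => huv (Subtype.ext h)
  have hS3 : ({w | inS z s(u, v) w}).ncard = 3 := by
    rw [setS_eq]
    rw [Set.ncard_insert_of_notMem (by simp [hzu, hzv]) (Set.toFinite _),
      Set.ncard_insert_of_notMem (by simp [huvc]) (Set.toFinite _),
      Set.ncard_singleton]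
  intro w
  by_cases hw : inS z s(u, v) w
  · rw [triGraph_nbhd_inS z _ K w hw,
      Set.ncard_diff_singleton_of_mem (show w ∈ {w | inS z s(u,v) w} from hw), hS3]
  · rw [show w = ↑↑(pk z s(u,v) w hw) from rfl, triGraph_nbhd_out,
      Set.ncard_image_of_injective _
        (fun a b h => Subtype.ext (Subtype.ext h))]
    exact hK _

lemma triGraph_triP (hp : ¬ p.IsDiag) : TriP z (triGraph z p K) := by
  obtain ⟨u, v, rfl⟩ := sym2_rep p
  have huv : u ≠ v := by
    intro h
    exact hp (by rw [h]; exact Sym2.mk_isDiag_iff.mpr rfl)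
  refine ⟨↑u, ↑v, ?_, ?_, ?_⟩
  · exact (triGraph_adj_z z _ K u).mpr (by simp)
  · exact (triGraph_adj_z z _ K v).mpr (by simp)
  · exact Or.inl ⟨(inS_iff z u v ↑u).mpr (Or.inr (Or.inl rfl)),
      (inS_iff z u v ↑v).mpr (Or.inr (Or.inr rfl)), fun h => huv (Subtype.ext h)⟩

end Tri

section TriBij

variable {V : Type*} [Finite V] (z : V)

noncomputable def triMap
    (q : Σ p : {p : Sym2 {v : V // v ≠ z} // ¬ p.IsDiag},
      Treg {y : {v : V // v ≠ z} // y ∉ p.1}) :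
    {G : Treg V // TriP z G.1} :=
  ⟨⟨triGraph z q.1.1 q.2.1, fun w => by
      rw [natcard_adj_eq_ncard]
      exact triGraph_deg z q.1.1 q.2.1 q.1.2
        (fun x => by rw [← natcard_adj_eq_ncard]; exact q.2.2 x) w⟩,
    triGraph_triP z q.1.1 q.2.1 q.1.2⟩

theorem triMap_injective : Function.Injective (triMap z) := by
  rintro ⟨⟨p, hp⟩, K⟩ ⟨⟨p', hp'⟩, K'⟩ h
  have hG : triGraph z p K.1 = triGraph z p' K'.1 := congrArg (fun q => q.1.1) h
  have hmem : ∀ x : {v : V // v ≠ z}, x ∈ p ↔ x ∈ p' := by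
    intro x
    rw [← triGraph_adj_z z p K.1, ← triGraph_adj_z z p' K'.1, hG]
  have hpp : p = p' := by
    obtain ⟨u, v, rfl⟩ := sym2_rep p
    have hne : u ≠ v := fun h => hp (by rw [h]; exact Sym2.mk_isDiag_iff.mpr rfl)
    exact (sym2_eq_of_mem_iff hne (fun x => by rw [← hmem x, Sym2.mem_iff])).symm
  subst hpp
  have hKK : K = K' := by
    apply Subtype.ext
    ext x y
    rw [← triGraph_adj_out z p K.1 x y, ← triGraph_adj_out z p K'.1 x y, hG]
  subst hKK
  rfl

theorem triMap_surjective : Function.Surjective (triMap z) := by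
  rintro ⟨⟨G, hdeg⟩, a, b, hza, hzb, hab⟩
  have hG2 : ∀ c, ({w | G.Adj c w}).ncard = 2 := fun c => by
    rw [← natcard_adj_eq_ncard]; exact hdeg c
  have haz : a ≠ z := fun h => G.irrefl (h ▸ hza)
  have hbz : b ≠ z := fun h => G.irrefl (h ▸ hzb)
  have habn : a ≠ b := G.ne_of_adj hab
  have hNz : {w | G.Adj z w} = {a, b} :=
    set_eq_pair_of_ncard (Set.toFinite _) (hG2 z) hza hzb habn
  have hNa : {w | G.Adj a w} = {z, b} :=
    set_eq_pair_of_ncard (Set.toFinite _) (hG2 a) hza.symm hab (fun h => hbz h.symm)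
  have hNb : {w | G.Adj b w} = {z, a} :=
    set_eq_pair_of_ncard (Set.toFinite _) (hG2 b) hzb.symm hab.symm (fun h => haz h.symm)
  set u' : {x : V // x ≠ z} := ⟨a, haz⟩ with hu'
  set v' : {x : V // x ≠ z} := ⟨b, hbz⟩ with hv'
  have hu'v' : u' ≠ v' := fun h => habn (congrArg Subtype.val h)
  set p : Sym2 {x : V // x ≠ z} := s(u', v') with hpdef
  have hp : ¬ p.IsDiag := by
    rw [hpdef, Sym2.mk_isDiag_iff]
    exact hu'v'
  have hSchar : ∀ w, inS z p w ↔ (w = z ∨ w = a ∨ w = b) := fun w => inS_iff z u' v' w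
  -- no edges from {z,a,b} to the outside
  have hout : ∀ w c, G.Adj c w → (c = z ∨ c = a ∨ c = b) → (w = z ∨ w = a ∨ w = b) := by
    rintro w c h (rfl | rfl | rfl)
    · have : w ∈ ({a, b} : Set V) := hNz ▸ h
      rcases this with h' | h'
      · exact Or.inr (Or.inl h')
      · exact Or.inr (Or.inr h')
    · have : w ∈ ({z, b} : Set V) := hNa ▸ h
      rcases this with h' | h'
      · exact Or.inl h'
      · exact Or.inr (Or.inr h')
    · have : w ∈ ({z, a} : Set V) := hNb ▸ h
      rcases this with h' | h'
      · exact Or.inl h'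
      · exact Or.inr (Or.inl h')
  set K : SimpleGraph {y : {x : V // x ≠ z} // y ∉ p} :=
    { Adj := fun x y => G.Adj ↑↑x ↑↑y
      symm := ⟨fun x y h => h.symm⟩
      loopless := ⟨fun x h => G.irrefl h⟩ } with hKdef
  have hnotS : ∀ x : {y : {x : V // x ≠ z} // y ∉ p}, (↑↑x : V) ≠ z ∧ (↑↑x : V) ≠ a ∧ (↑↑x : V) ≠ b := by
    intro x
    refine ⟨(↑x : {x : V // x ≠ z}).2, fun h => x.2 ?_, fun h => x.2 ?_⟩
    · exact Sym2.mem_iff.mpr (Or.inl (Subtype.ext h))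
    · exact Sym2.mem_iff.mpr (Or.inr (Subtype.ext h))
  have hKreg : ∀ x, ({d | K.Adj x d}).ncard = 2 := by
    intro x
    obtain ⟨hxz, hxa, hxb⟩ := hnotS x
    have himg : (fun d : {y : {x : V // x ≠ z} // y ∉ p} => (↑↑d : V)) '' {d | K.Adj x d}
        = {w | G.Adj ↑↑x w} := by
      ext w
      simp only [Set.mem_image, Set.mem_setOf_eq]
      constructor
      · rintro ⟨d, hd, rfl⟩
        exact hd
      · intro hw
        have hwz : w ≠ z := by
          intro hwe
          have : G.Adj z ↑↑x := hwe ▸ hw.symm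
          rcases hout ↑↑x z this (Or.inl rfl) with h | h | h
          · exact hxz h
          · exact hxa h
          · exact hxb h
        have hwa : w ≠ a := by
          intro hwe
          have : G.Adj a ↑↑x := hwe ▸ hw.symm
          rcases hout ↑↑x a this (Or.inr (Or.inl rfl)) with h | h | h
          · exact hxz h
          · exact hxa h
          · exact hxb h
        have hwb : w ≠ b := by
          intro hwe
          have : G.Adj b ↑↑x := hwe ▸ hw.symm
          rcases hout ↑↑x b this (Or.inr (Or.inr rfl)) with h | h | h
          · exact hxz h
          · exact hxa h
          · exact hxb h
        refine ⟨⟨⟨w, hwz⟩, ?_⟩, hw, rfl⟩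
        intro hmem
        rcases Sym2.mem_iff.mp hmem with h | h
        · exact hwa (congrArg Subtype.val h)
        · exact hwb (congrArg Subtype.val h)
    have hinj : Function.Injective
        (fun d : {y : {x : V // x ≠ z} // y ∉ p} => (↑↑d : V)) :=
      fun c d h => Subtype.ext (Subtype.ext h)
    rw [← Set.ncard_image_of_injective {d | K.Adj x d} hinj, himg]
    exact hG2 _
  have hGeq : triGraph z p K = G := by
    ext c d
    by_cases hcS : inS z p c
    · by_cases hdS : inS z p d
      · have hc' := (hSchar c).mp hcS
        have hd' := (hSchar d).mp hdS
        constructor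
        · rintro (⟨-, -, hne⟩ | ⟨hc'', -, -⟩)
          · rcases hc' with rfl | rfl | rfl <;> rcases hd' with rfl | rfl | rfl
            · exact absurd rfl hne
            · exact hza
            · exact hzb
            · exact hza.symm
            · exact absurd rfl hne
            · exact hab
            · exact hzb.symm
            · exact hab.symm
            · exact absurd rfl hne
          · exact absurd hcS hc''
        · intro h
          exact Or.inl ⟨hcS, hdS, G.ne_of_adj h⟩
      · constructor
        · rintro (⟨-, hdS', -⟩ | ⟨hcS', -, -⟩)
          · exact absurd hdS' hdS
          · exact absurd hcS hcS'
        · intro h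
          exact absurd ((hSchar d).mpr (hout d c h ((hSchar c).mp hcS))) hdS
    · by_cases hdS : inS z p d
      · constructor
        · rintro (⟨hcS', -, -⟩ | ⟨-, hdS', -⟩)
          · exact absurd hcS' hcS
          · exact absurd hdS hdS'
        · intro h
          exact absurd ((hSchar c).mpr (hout c d h.symm ((hSchar d).mp hdS))) hcS
      · rw [show c = ↑↑(pk z p c hcS) from rfl, show d = ↑↑(pk z p d hdS) from rfl,
          triGraph_adj_out]
  exact ⟨⟨⟨p, hp⟩, ⟨K, fun x => by rw [natcard_adj_eq_ncard]; exact hKreg x⟩⟩,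
    Subtype.ext (Subtype.ext hGeq)⟩

end TriBij

lemma mem_pair_card {W : Type*} [Finite W] (p : Sym2 W) (hp : ¬ p.IsDiag) :
    Nat.card {y : W // y ∈ p} = 2 := by
  obtain ⟨u, v, rfl⟩ := sym2_rep p
  have huv : u ≠ v := fun h => hp (by rw [h]; exact Sym2.mk_isDiag_iff.mpr rfl)
  have : {y : W | y ∈ s(u, v)} = {u, v} := by
    ext y
    rw [Set.mem_setOf_eq, Sym2.mem_iff]
    simp
  rw [show {y : W // y ∈ s(u, v)} = ↥{y : W | y ∈ s(u, v)} from rfl,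
    Nat.card_coe_set_eq, this, Set.ncard_pair huv]

lemma countQ {W : Type*} [Fintype W] [DecidableEq W] :
    Nat.card {p : Sym2 W // ¬ p.IsDiag} = (Fintype.card W).choose 2 := by
  rw [Nat.card_eq_fintype_card]
  exact Sym2.card_subtype_not_diag

lemma count_caseA {V : Type*} [Fintype V] (z : V) :
    Nat.card {G : Treg V // TriP z G.1}
      = (Fintype.card V - 1).choose 2 * Nat.card (Treg (Fin (Fintype.card V - 3))) := by
  rw [← Nat.card_eq_of_bijective (triMap z) ⟨triMap_injective z, triMap_surjective z⟩]
  letI : DecidableEq {v : V // v ≠ z} := Classical.decEq _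
  letI : Fintype {p : Sym2 {v : V // v ≠ z} // ¬ p.IsDiag} := Fintype.ofFinite _
  letI : ∀ q : {p : Sym2 {v : V // v ≠ z} // ¬ p.IsDiag},
      Fintype (Treg {y : {v : V // v ≠ z} // y ∉ q.1}) := fun q => Fintype.ofFinite _
  have hVp : Fintype.card {v : V // v ≠ z} = Fintype.card V - 1 := by
    rw [Fintype.card_subtype_compl, Fintype.card_subtype_eq]
  have hfib : ∀ q : {p : Sym2 {v : V // v ≠ z} // ¬ p.IsDiag},
      Fintype.card (Treg {y : {v : V // v ≠ z} // y ∉ q.1})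
        = Nat.card (Treg (Fin (Fintype.card V - 3))) := by
    intro q
    have hcard : Fintype.card {y : {v : V // v ≠ z} // y ∉ q.1} = Fintype.card V - 3 := by
      have h2 : Fintype.card {y : {v : V // v ≠ z} // y ∈ q.1} = 2 := by
        rw [← Nat.card_eq_fintype_card]
        exact mem_pair_card q.1 q.2
      rw [Fintype.card_subtype_compl, h2, hVp]
      omega
    rw [← Nat.card_eq_fintype_card]
    exact card_treg_congr (Fintype.equivFinOfCardEq hcard)
  have hQ : Fintype.card {p : Sym2 {v : V // v ≠ z} // ¬ p.IsDiag}
      = (Fintype.card V - 1).choose 2 := by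
    rw [← hVp, ← Nat.card_eq_fintype_card, countQ]
  rw [Nat.card_eq_fintype_card, Fintype.card_sigma,
    Finset.sum_congr rfl (fun q _ => hfib q), Finset.sum_const, smul_eq_mul,
    Finset.card_univ, hQ]

lemma treg_card_split {V : Type*} [Finite V] (z : V) :
    Nat.card (Treg V) = Nat.card {G : Treg V // TriP z G.1}
      + Nat.card {G : Treg V // ¬ TriP z G.1} := by
  rw [← Nat.card_sum]
  exact Nat.card_congr (Equiv.sumCompl (fun G : Treg V => TriP z G.1)).symm

theorem treg_recurrence (n : ℕ) (hn : 3 ≤ n) :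
    Nat.card (Treg (Fin n)) = (n - 1) * Nat.card (Treg (Fin (n - 1)))
      + (n - 1).choose 2 * Nat.card (Treg (Fin (n - 3))) := by
  have hpos : 0 < n := by omega
  set z : Fin n := ⟨0, hpos⟩
  have hcomp : Nat.card (Treg {v : Fin n // v ≠ z}) = Nat.card (Treg (Fin (n - 1))) := by
    refine card_treg_congr (Fintype.equivFinOfCardEq ?_)
    rw [Fintype.card_subtype_compl, Fintype.card_subtype_eq, Fintype.card_fin]
  rw [treg_card_split z, count_caseB z, count_caseA z, hcomp, Fintype.card_fin,
    mul_comm (Nat.card (Treg (Fin (n - 1)))) (n - 1), add_comm]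


/-- `twoRegularCount n` is the number of simple graphs on the labeled vertex
set `{1,…,n}` (here `Fin n`) in which every vertex has degree exactly `2`. -/
noncomputable def twoRegularCount (n : ℕ) : ℕ :=
  Nat.card {G : SimpleGraph (Fin n) // ∀ v, Nat.card {w : Fin n // G.Adj v w} = 2}

theorem stmt2 :
    twoRegularCount 0 = 1 ∧ twoRegularCount 1 = 0 ∧ twoRegularCount 2 = 0 ∧
      ∀ n : ℕ, 3 ≤ n →
        twoRegularCount n =
          (n - 1) * twoRegularCount (n - 1) + (n - 1).choose 2 * twoRegularCount (n - 3) := by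
  refine ⟨treg_zero, treg_one, treg_two, fun n hn => treg_recurrence n hn⟩
end

section
/- For each n ≥ 1, let ν_n be the least positive integer k such that the number of permutations σ of {1,…,n} whose longest cycle has length at most k is at least n!/2. Then ν_n / n converges to e^{−1/2} as n → ∞. -/
open Finset Function Equiv Equiv.Perm

/-- The length of the longest cycle of a permutation `σ` of `Fin n`
(orbit size of `x` equals the minimal period of `σ` at `x`; fixed points
count as cycles of length `1`). -/
noncomputable def maxCycleLen {n : ℕ} (σ : Equiv.Perm (Fin n)) : ℕ :=
  Finset.univ.sup fun x => Function.minimalPeriod σ x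

/-- `nu n` is the least positive integer `k` such that the number of
permutations of `{1,…,n}` whose longest cycle has length at most `k`
is at least `n!/2` (the median longest-cycle length). -/
noncomputable def nu (n : ℕ) : ℕ :=
  sInf {k : ℕ | 1 ≤ k ∧
    (n.factorial : ℚ) / 2 ≤
      ((Finset.univ.filter fun σ : Equiv.Perm (Fin n) => maxCycleLen σ ≤ k).card : ℚ)}

section Orbits

variable {n : ℕ} (σ : Equiv.Perm (Fin n))

lemma minPer_pos (x : Fin n) : 0 < minimalPeriod σ x := by
  apply IsPeriodicPt.minimalPeriod_pos (orderOf_pos σ)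
  unfold IsPeriodicPt IsFixedPt
  rw [Equiv.Perm.iterate_eq_pow, pow_orderOf_eq_one]; rfl

/-- the orbit of `x` under `σ` as a Finset -/
noncomputable def orb (x : Fin n) : Finset (Fin n) :=
  Finset.image (fun i : Fin (minimalPeriod σ x) => (σ ^ (i : ℕ)) x) Finset.univ

lemma pow_eq_iterate (i : ℕ) (x : Fin n) : (σ ^ i) x = (⇑σ)^[i] x := by
  rw [Equiv.Perm.iterate_eq_pow]

lemma card_orb (x : Fin n) : (orb σ x).card = minimalPeriod σ x := by
  rw [orb, Finset.card_image_of_injective _ ?_, Finset.card_univ, Fintype.card_fin]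
  intro i j hij
  simp only [pow_eq_iterate] at hij
  exact Fin.ext (iterate_injOn_Iio_minimalPeriod (by simp) (by simp) hij)

lemma mem_orb_self (x : Fin n) : x ∈ orb σ x :=
  Finset.mem_image.2 ⟨⟨0, minPer_pos σ x⟩, Finset.mem_univ _, by simp⟩

lemma mem_orb_iff {x y : Fin n} : y ∈ orb σ x ↔ ∃ i, (σ ^ i) x = y := by
  constructor
  · rintro h; rcases Finset.mem_image.1 h with ⟨i, -, rfl⟩; exact ⟨i, rfl⟩
  · rintro ⟨i, rfl⟩
    refine Finset.mem_image.2 ⟨⟨i % minimalPeriod σ x, Nat.mod_lt _ (minPer_pos σ x)⟩,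
      Finset.mem_univ _, ?_⟩
    simp only [pow_eq_iterate]
    exact iterate_mod_minimalPeriod_eq

lemma periodicPt_perm (x : Fin n) : x ∈ periodicPts σ :=
  ⟨minimalPeriod σ x, minPer_pos σ x, isPeriodicPt_minimalPeriod _ _⟩

lemma minPer_of_mem_orb {x y : Fin n} (h : y ∈ orb σ x) :
    minimalPeriod σ y = minimalPeriod σ x := by
  rcases (mem_orb_iff σ).1 h with ⟨i, rfl⟩
  rw [pow_eq_iterate]
  exact minimalPeriod_apply_iterate (periodicPt_perm σ x) i

lemma orb_eq_of_mem {x y : Fin n} (h : y ∈ orb σ x) : orb σ y = orb σ x := by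
  apply Finset.eq_of_subset_of_card_le
  · intro z hz
    rcases (mem_orb_iff σ).1 hz with ⟨i, rfl⟩
    rcases (mem_orb_iff σ).1 h with ⟨j, rfl⟩
    exact (mem_orb_iff σ).2 ⟨i + j, by rw [pow_add]; rfl⟩
  · rw [card_orb, card_orb, minPer_of_mem_orb σ h]

lemma minPer_le (x : Fin n) : minimalPeriod σ x ≤ n := by
  rw [← card_orb]; simpa using Finset.card_le_univ (orb σ x)

end Orbits

section Counting

variable {n m : ℕ}

lemma orb_eq_orb {σ : Equiv.Perm (Fin n)} {x y : Fin n}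
    (hx : n < 2 * minimalPeriod σ x) (hy : n < 2 * minimalPeriod σ y) :
    orb σ x = orb σ y := by
  by_contra hne
  have hdisj : Disjoint (orb σ x) (orb σ y) := by
    rw [Finset.disjoint_left]
    intro z hzx hzy
    exact hne ((orb_eq_of_mem σ hzx).symm.trans (orb_eq_of_mem σ hzy))
  have := Finset.card_le_univ (orb σ x ∪ orb σ y)
  rw [Finset.card_union_of_disjoint hdisj, card_orb, card_orb] at this
  simp only [Fintype.card_fin, Finset.card_univ] at this
  omega

lemma card_filter_minPer {σ : Equiv.Perm (Fin n)} (hm : n < 2 * m)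
    {x : Fin n} (hx : minimalPeriod σ x = m) :
    (Finset.univ.filter (fun y => minimalPeriod σ y = m)).card = m := by
  have : (Finset.univ.filter (fun y => minimalPeriod σ y = m)) = orb σ x := by
    ext y
    simp only [Finset.mem_filter, Finset.mem_univ, true_and]
    constructor
    · intro hy
      have := orb_eq_orb (σ := σ) (x := x) (y := y) (by omega) (by omega)
      exact this ▸ mem_orb_self σ y
    · intro hy
      rw [minPer_of_mem_orb σ hy, hx]
  rw [this, card_orb, hx]

/-- permutations having a cycle of length `m` -/
noncomputable def Am (n m : ℕ) : Finset (Equiv.Perm (Fin n)) :=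
  Finset.univ.filter (fun σ => ∃ x, minimalPeriod σ x = m)

/-- pairs `(σ, x)` with minimal period of `x` equal to `m` -/
noncomputable def Pm (n m : ℕ) : Finset (Equiv.Perm (Fin n) × Fin n) :=
  Finset.univ.filter (fun p => minimalPeriod p.1 p.2 = m)

lemma card_Pm_eq_sum :
    (Pm n m).card = ∑ σ : Equiv.Perm (Fin n),
      (Finset.univ.filter (fun y => minimalPeriod σ y = m)).card := by
  rw [Finset.card_eq_sum_card_fiberwise (f := Prod.fst) (t := Finset.univ)
    (fun x _ => Finset.mem_univ _)]
  refine Finset.sum_congr rfl (fun σ _ => ?_)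
  refine Finset.card_bij' (fun p _ => p.2) (fun y _ => (σ, y)) ?_ ?_ ?_ ?_
  · rintro ⟨τ, y⟩ hp
    simp only [Pm, Finset.mem_filter, Finset.mem_univ, true_and] at hp ⊢
    obtain ⟨h1, rfl⟩ := hp
    exact h1
  · intro y hy
    simp only [Pm, Finset.mem_filter, Finset.mem_univ, true_and] at hy
    exact Finset.mem_filter.2 ⟨Finset.mem_filter.2 ⟨Finset.mem_univ _, hy⟩, rfl⟩
  · rintro ⟨τ, y⟩ hp
    simp only [Pm, Finset.mem_filter, Finset.mem_univ, true_and] at hp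
    obtain ⟨h1, rfl⟩ := hp
    rfl
  · intro y hy
    rfl

lemma card_Pm_eq_card_Am (hm : n < 2 * m) : (Pm n m).card = (Am n m).card * m := by
  rw [card_Pm_eq_sum]
  rw [← Finset.sum_filter_add_sum_filter_not Finset.univ (fun σ => σ ∈ Am n m)]
  have h2 : ∀ σ ∈ Finset.univ.filter (fun σ => σ ∉ Am n m),
      (Finset.univ.filter (fun y => minimalPeriod σ y = m)).card = 0 := by
    intro σ hσ
    simp only [Finset.mem_filter, Am, Finset.mem_univ, true_and, not_exists] at hσ
    rw [Finset.card_eq_zero, Finset.filter_eq_empty_iff]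
    exact fun {y} _ => hσ y
  rw [Finset.sum_congr rfl h2, Finset.sum_const_zero, add_zero]
  have h1 : ∀ σ ∈ Finset.univ.filter (fun σ => σ ∈ Am n m),
      (Finset.univ.filter (fun y => minimalPeriod σ y = m)).card = m := by
    intro σ hσ
    simp only [Finset.mem_filter, Am, Finset.mem_univ, true_and] at hσ
    obtain ⟨x, hx⟩ := hσ
    exact card_filter_minPer hm hx
  rw [Finset.sum_congr rfl h1, Finset.sum_const, smul_eq_mul]
  congr 1
  simp [Am]

lemma c_apply (f : Fin m → Fin n) (hf : Function.Injective f) (i : ℕ) (h : i < m) :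
    (List.ofFn f).formPerm (f ⟨i, h⟩) = f ⟨(i+1) % m, Nat.mod_lt _ (by omega)⟩ := by
  have w : (List.ofFn f).Nodup := List.nodup_ofFn.2 hf
  have := List.formPerm_apply_getElem (List.ofFn f) w i (by simpa using h)
  simpa [List.getElem_ofFn] using this

lemma iter_apply (f : Fin m → Fin n) (hf : Function.Injective f) (hm : 0 < m)
    (ρ : Equiv.Perm (Fin n)) (hρ : ∀ a ∈ Finset.image f Finset.univ, ρ a = a) (j : ℕ) :
    (((List.ofFn f).formPerm * ρ)^j) (f ⟨0, hm⟩) = f ⟨j % m, Nat.mod_lt _ hm⟩ := by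
  induction j with
  | zero => simp [Nat.zero_mod]
  | succ j ih =>
    rw [pow_succ', Equiv.Perm.mul_apply, ih, Equiv.Perm.mul_apply,
      hρ _ (Finset.mem_image.2 ⟨_, Finset.mem_univ _, rfl⟩),
      c_apply f hf _ (Nat.mod_lt _ hm)]
    congr 1
    apply Fin.ext
    simp [Nat.mod_add_mod]

lemma card_fixing (s : Finset (Fin n)) :
    (Finset.univ.filter (fun ρ : Equiv.Perm (Fin n) => ∀ a ∈ s, ρ a = a)).card
      = (n - s.card).factorial := by
  rw [← Fintype.card_subtype]
  have e1 : {ρ : Equiv.Perm (Fin n) // ∀ a ∈ s, ρ a = a}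
      ≃ Equiv.Perm {a : Fin n // a ∉ s} := by
    refine Equiv.trans ?_ (Equiv.Perm.subtypeEquivSubtypePerm (fun a => a ∉ s)).symm
    exact Equiv.subtypeEquivRight (fun ρ => by
      constructor
      · intro h a ha
        exact h a (by simpa using ha)
      · intro h a ha
        exact h a (by simpa using ha))
  rw [Fintype.card_congr e1, Fintype.card_perm]
  congr 1
  rw [Fintype.card_subtype_compl]
  simp [Fintype.card_coe]

lemma card_fiber (hm : 0 < m) (f : Fin m → Fin n) (hf : Function.Injective f) :
    ((Pm n m).filter (fun p => (fun i : Fin m => (p.1 ^ (i:ℕ)) p.2) = f)).card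
      = (n - m).factorial := by
  have hcards : (Finset.image f Finset.univ).card = m := by
    rw [Finset.card_image_of_injective _ hf, Finset.card_univ, Fintype.card_fin]
  have hfix := card_fixing (Finset.image f Finset.univ)
  rw [hcards] at hfix
  rw [← hfix]
  set c := (List.ofFn f).formPerm with hc
  set s := Finset.image f Finset.univ with hs
  set x0 := f ⟨0, hm⟩ with hx0
  refine Finset.card_bij' (fun p _ => c⁻¹ * p.1) (fun ρ _ => (c * ρ, x0)) ?_ ?_ ?_ ?_
  · rintro ⟨σ, x⟩ hp
    simp only [Pm, Finset.mem_filter, Finset.mem_univ, true_and] at hp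
    obtain ⟨hper, hfun⟩ := hp
    have hfi : ∀ i : Fin m, (σ ^ (i:ℕ)) x = f i := fun i => congrFun hfun i
    simp only [Finset.mem_filter, Finset.mem_univ, true_and]
    intro a ha
    rw [hs] at ha
    rcases Finset.mem_image.1 ha with ⟨i, -, rfl⟩
    have key : σ (f i) = c (f i) := by
      have h1 : σ (f i) = (σ ^ ((i:ℕ)+1)) x := by
        rw [← hfi i, ← Equiv.Perm.mul_apply, ← pow_succ']
      have h2 : c (f i) = f ⟨((i:ℕ)+1) % m, Nat.mod_lt _ hm⟩ := by
        rw [hc]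
        have := c_apply f hf (i:ℕ) i.2
        simpa using this
      rcases Nat.lt_or_ge ((i:ℕ)+1) m with hlt | hge
      · have h3 : f ⟨((i:ℕ)+1) % m, Nat.mod_lt _ hm⟩ = f ⟨(i:ℕ)+1, hlt⟩ := by
          congr 1
          exact Fin.ext (Nat.mod_eq_of_lt hlt)
        rw [h1, h2, h3]
        exact hfi ⟨(i:ℕ)+1, hlt⟩
      · have him : (i:ℕ)+1 = m := by omega
        have h3 : f ⟨((i:ℕ)+1) % m, Nat.mod_lt _ hm⟩ = f ⟨0, hm⟩ := by
          congr 1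
          exact Fin.ext (by simp [him])
        have hx : (σ ^ ((i:ℕ)+1)) x = x := by
          have h5 := Function.isPeriodicPt_minimalPeriod (⇑σ) x
          rw [hper] at h5
          have h6 : (⇑σ)^[m] x = x := h5
          rw [him, ← Equiv.Perm.iterate_eq_pow]
          exact h6
        rw [h1, h2, h3, hx]
        have h7 := hfi ⟨0, hm⟩
        simpa using h7
    rw [Equiv.Perm.mul_apply, key]
    simp
  · intro ρ hρ
    simp only [Finset.mem_filter, Finset.mem_univ, true_and] at hρ
    have hiter := iter_apply f hf hm ρ (by rw [← hs]; exact hρ)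
    have hfun : (fun i : Fin m => ((c * ρ) ^ (i:ℕ)) x0) = f := by
      funext i
      rw [hx0, hiter (i:ℕ)]
      congr 1
      exact Fin.ext (Nat.mod_eq_of_lt i.2)
    have hper : Function.minimalPeriod (c * ρ) x0 = m := by
      have hpp : Function.IsPeriodicPt (⇑(c * ρ)) m x0 := by
        unfold Function.IsPeriodicPt Function.IsFixedPt
        rw [Equiv.Perm.iterate_eq_pow, hx0, hiter m]
        simp
      have hd := Function.IsPeriodicPt.minimalPeriod_le hm hpp
      have hdpos := minPer_pos (c * ρ) x0
      set d := Function.minimalPeriod (⇑(c * ρ)) x0 with hdd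
      have h8 : ((c * ρ) ^ d) x0 = x0 := by
        rw [← Equiv.Perm.iterate_eq_pow]
        exact Function.iterate_minimalPeriod
      rw [hx0, hiter d] at h8
      have h9 := hf h8
      have hdm : d % m = 0 := by
        have h4 := congrArg Fin.val h9
        simpa using h4
      exact Nat.le_antisymm hd (Nat.le_of_dvd hdpos (Nat.dvd_of_mod_eq_zero hdm))
    simp only [Pm, Finset.mem_filter, Finset.mem_univ, true_and]
    exact ⟨hper, hfun⟩
  · rintro ⟨σ, x⟩ hp
    simp only [Pm, Finset.mem_filter, Finset.mem_univ, true_and] at hp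
    obtain ⟨hper, hfun⟩ := hp
    have hx : x = x0 := by
      rw [hx0, ← congrFun hfun ⟨0, hm⟩]
      simp
    simp [hx]
  · intro ρ hρ
    simp

noncomputable def InjF (n m : ℕ) : Finset (Fin m → Fin n) :=
  Finset.univ.filter Function.Injective

lemma card_InjF : (InjF n m).card = Nat.descFactorial n m := by
  rw [InjF, ← Fintype.card_subtype, Fintype.card_congr
    (Equiv.subtypeInjectiveEquivEmbedding (Fin m) (Fin n)),
    Fintype.card_embedding_eq, Fintype.card_fin, Fintype.card_fin]

lemma card_Pm (hm : 1 ≤ m) :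
    (Pm n m).card = Nat.descFactorial n m * (n - m).factorial := by
  rw [Finset.card_eq_sum_card_fiberwise
    (f := fun p : Equiv.Perm (Fin n) × Fin n => fun i : Fin m => (p.1 ^ (i:ℕ)) p.2)
    (t := InjF n m) ?_]
  · have hcong : ∀ f ∈ InjF n m,
        ((Pm n m).filter (fun a => (fun i : Fin m => (a.1 ^ (i:ℕ)) a.2) = f)).card
          = (n - m).factorial := by
      intro f hf
      exact card_fiber hm f ((Finset.mem_filter.1 hf).2)
    rw [Finset.sum_congr rfl hcong, Finset.sum_const, smul_eq_mul, card_InjF]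
  · rintro ⟨σ, x⟩ hp
    simp only [Pm, Finset.mem_filter, Finset.mem_univ, true_and] at hp
    refine Finset.mem_filter.2 ⟨Finset.mem_univ _, ?_⟩
    intro i j hij
    apply Fin.ext
    have h1 : ((⇑σ)^[(i:ℕ)] x) = ((⇑σ)^[(j:ℕ)] x) := by
      rw [Equiv.Perm.iterate_eq_pow, Equiv.Perm.iterate_eq_pow]
      exact hij
    exact Function.iterate_injOn_Iio_minimalPeriod
      (by simp at hp; simp [hp]) (by simp at hp; simp [hp]) h1

lemma card_Am_mul (hm1 : 1 ≤ m) (hmn : m ≤ n) (h2 : n < 2 * m) :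
    (Am n m).card * m = n.factorial := by
  rw [← card_Pm_eq_card_Am h2, card_Pm hm1, mul_comm]
  exact Nat.factorial_mul_descFactorial hmn

end Counting


lemma harm_upper : ∀ {k n : ℕ}, 1 ≤ k → k ≤ n →
    ∑ m ∈ Finset.Ioc k n, (1 : ℝ)/m ≤ Real.log n - Real.log k := by
  intro k n hk hkn
  induction n, hkn using Nat.le_induction with
  | base => simp
  | succ n hn ih =>
    rw [Finset.sum_Ioc_succ_top (by omega)]
    have h1 : (1:ℝ)/(n+1) ≤ Real.log (n+1) - Real.log n := by
      have hn0 : (0:ℝ) < n := by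
        have : (1:ℕ) ≤ n := by omega
        exact_mod_cast Nat.lt_of_lt_of_le Nat.zero_lt_one this
      have hx : (0:ℝ) < (n:ℝ)/(n+1) := by positivity
      have := Real.log_le_sub_one_of_pos hx
      rw [Real.log_div (by positivity) (by positivity)] at this
      have hne : (n:ℝ)+1 > 0 := by positivity
      rw [div_sub_one (by positivity)] at this
      -- this : log n - log (n+1) ≤ (n - (n+1))/(n+1) = -1/(n+1)
      have h2 : ((n:ℝ) - ((n:ℝ)+1))/((n:ℝ)+1) = -(1/((n:ℝ)+1)) := by ring
      rw [h2] at this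
      linarith
    push_cast
    push_cast at ih
    linarith

lemma harm_lower : ∀ {k n : ℕ}, 1 ≤ k → k ≤ n →
    Real.log (n+1) - Real.log (k+1) ≤ ∑ m ∈ Finset.Ioc k n, (1 : ℝ)/m := by
  intro k n hk hkn
  induction n, hkn using Nat.le_induction with
  | base => simp
  | succ n hn ih =>
    rw [Finset.sum_Ioc_succ_top (by omega)]
    have h1 : Real.log (n+1+1) - Real.log (n+1) ≤ (1:ℝ)/(n+1) := by
      have hx : (0:ℝ) < ((n:ℝ)+2)/((n:ℝ)+1) := by positivity
      have := Real.log_le_sub_one_of_pos hx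
      have ha : ((n:ℝ)+2) ≠ 0 := by positivity
      have hb : ((n:ℝ)+1) ≠ 0 := by positivity
      rw [Real.log_div ha hb] at this
      have h2 : ((n:ℝ)+2)/((n:ℝ)+1) - 1 = 1/((n:ℝ)+1) := by
        field_simp
        norm_num
      rw [h2] at this
      have h3 : ((n:ℝ)+1+1) = ((n:ℝ)+2) := by ring
      rw [h3]
      linarith
    push_cast
    push_cast at ih
    linarith

lemma exp_half_lt : Real.exp (1/2) < 1.65 := by
  have h1 : Real.exp (1/2) * Real.exp (1/2) = Real.exp 1 := by
    rw [← Real.exp_add]; norm_num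
  have h2 : Real.exp 1 < 2.7182818286 := Real.exp_one_lt_d9
  nlinarith [Real.exp_pos (1/2 : ℝ)]

section CountFormula
variable {n k : ℕ}

lemma maxCycleLen_lt_iff {σ : Equiv.Perm (Fin n)} :
    k < maxCycleLen σ ↔ ∃ x, k < Function.minimalPeriod σ x := by
  rw [maxCycleLen, Finset.lt_sup_iff]
  simp

lemma filter_gt_eq_biUnion :
    (Finset.univ.filter fun σ : Equiv.Perm (Fin n) => k < maxCycleLen σ)
      = (Finset.Ioc k n).biUnion (fun m => Am n m) := by
  ext σ
  simp only [Finset.mem_filter, Finset.mem_univ, true_and, Finset.mem_biUnion, Finset.mem_Ioc]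
  constructor
  · intro h
    rcases maxCycleLen_lt_iff.1 h with ⟨x, hx⟩
    exact ⟨Function.minimalPeriod σ x, ⟨hx, minPer_le σ x⟩,
      Finset.mem_filter.2 ⟨Finset.mem_univ _, ⟨x, rfl⟩⟩⟩
  · rintro ⟨m, ⟨hkm, hmn⟩, hσ⟩
    rcases (Finset.mem_filter.1 hσ).2 with ⟨x, hx⟩
    exact maxCycleLen_lt_iff.2 ⟨x, by omega⟩

lemma Am_disjoint (hkn : n ≤ 2*k+1) : ∀ m ∈ Finset.Ioc k n, ∀ m' ∈ Finset.Ioc k n,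
    m ≠ m' → Disjoint (Am n m) (Am n m') := by
  intro m hm m' hm' hne
  simp only [Finset.mem_Ioc] at hm hm'
  rw [Finset.disjoint_left]
  intro σ h1 h2
  simp only [Am, Finset.mem_filter, Finset.mem_univ, true_and] at h1 h2
  rcases h1 with ⟨x, hx⟩
  rcases h2 with ⟨y, hy⟩
  have horb := orb_eq_orb (σ := σ) (x := x) (y := y) (by omega) (by omega)
  have := card_orb σ x
  rw [horb, card_orb σ y] at this
  omega

lemma card_le_filter_eq (hkn : n ≤ 2*k+1) :
    ((Finset.univ.filter fun σ : Equiv.Perm (Fin n) => maxCycleLen σ ≤ k).card : ℚ)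
      = n.factorial * (1 - ∑ m ∈ Finset.Ioc k n, (1:ℚ)/m) := by
  have hsplit : (Finset.univ.filter fun σ : Equiv.Perm (Fin n) => maxCycleLen σ ≤ k).card
      + (Finset.univ.filter fun σ : Equiv.Perm (Fin n) => ¬ maxCycleLen σ ≤ k).card
      = n.factorial := by
    rw [Finset.card_filter_add_card_filter_not, Finset.card_univ,
      Fintype.card_perm, Fintype.card_fin]
  have hneg : (Finset.univ.filter fun σ : Equiv.Perm (Fin n) => ¬ maxCycleLen σ ≤ k)
      = (Finset.univ.filter fun σ : Equiv.Perm (Fin n) => k < maxCycleLen σ) := by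
    apply Finset.filter_congr
    intro σ _
    simp [not_le]
  rw [hneg, filter_gt_eq_biUnion] at hsplit
  have hcardB : ((((Finset.Ioc k n).biUnion (fun m => Am n m)).card : ℕ) : ℚ)
      = n.factorial * ∑ m ∈ Finset.Ioc k n, (1:ℚ)/m := by
    rw [Finset.card_biUnion (Am_disjoint hkn)]
    push_cast
    rw [Finset.mul_sum]
    refine Finset.sum_congr rfl (fun m hm => ?_)
    simp only [Finset.mem_Ioc] at hm
    have h1 := card_Am_mul (n := n) (m := m) (by omega) (by omega) (by omega)
    have hm0 : (m : ℚ) ≠ 0 := Nat.cast_ne_zero.mpr (by omega)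
    have h2 : ((Am n m).card : ℚ) * m = n.factorial := by exact_mod_cast h1
    rw [mul_one_div, eq_div_iff hm0]
    exact h2
  have hA : ((Finset.univ.filter fun σ : Equiv.Perm (Fin n) => maxCycleLen σ ≤ k).card : ℚ)
      = (n.factorial : ℚ) - (((Finset.Ioc k n).biUnion (fun m => Am n m)).card : ℕ) := by
    have h3 : (((Finset.univ.filter fun σ : Equiv.Perm (Fin n) => maxCycleLen σ ≤ k).card : ℕ) : ℚ)
        + (((Finset.Ioc k n).biUnion (fun m => Am n m)).card : ℕ) = (n.factorial : ℚ) := by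
      exact_mod_cast hsplit
    linarith
  rw [hA, hcardB]
  ring

end CountFormula

section NuAnalysis


variable {n k : ℕ}

/-- the defining set of `nu n` -/
def nuSet (n : ℕ) : Set ℕ := {k : ℕ | 1 ≤ k ∧
    (n.factorial : ℚ) / 2 ≤
      ((Finset.univ.filter fun σ : Equiv.Perm (Fin n) => maxCycleLen σ ≤ k).card : ℚ)}

lemma nu_eq : nu n = sInf (nuSet n) := rfl

lemma P_iff (hk1 : 1 ≤ k) (hkn : n ≤ 2*k+1) :
    k ∈ nuSet n ↔ ∑ m ∈ Finset.Ioc k n, (1:ℚ)/m ≤ 1/2 := by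
  have hf : (0:ℚ) < n.factorial := by
    exact_mod_cast n.factorial_pos
  rw [nuSet, Set.mem_setOf_eq, card_le_filter_eq hkn]
  have h1 : (n.factorial : ℚ)/2 = n.factorial * (1/2) := by ring
  rw [h1, mul_le_mul_iff_right₀ hf]
  constructor
  · rintro ⟨-, h⟩
    linarith
  · intro h
    exact ⟨hk1, by linarith⟩

lemma count_mono {k k' : ℕ} (h : k ≤ k') (hmem : k ∈ nuSet n) (hk'1 : 1 ≤ k') :
    k' ∈ nuSet n := by
  refine ⟨hk'1, le_trans hmem.2 ?_⟩
  have : (Finset.univ.filter fun σ : Equiv.Perm (Fin n) => maxCycleLen σ ≤ k)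
      ⊆ (Finset.univ.filter fun σ : Equiv.Perm (Fin n) => maxCycleLen σ ≤ k') := by
    intro σ hσ
    rw [Finset.mem_filter] at hσ ⊢
    exact ⟨hσ.1, le_trans hσ.2 h⟩
  exact_mod_cast Finset.card_le_card this

lemma max_mem_nuSet : (max n 1) ∈ nuSet n := by
  refine ⟨le_max_right _ _, ?_⟩
  have hall : (Finset.univ.filter fun σ : Equiv.Perm (Fin n) => maxCycleLen σ ≤ max n 1)
      = Finset.univ := by
    rw [Finset.filter_eq_self]
    intro σ _
    exact le_trans (Finset.sup_le (fun x _ => minPer_le σ x)) (le_max_left _ _)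
  rw [hall, Finset.card_univ, Fintype.card_perm, Fintype.card_fin]
  have hf : (0:ℚ) < n.factorial := by exact_mod_cast n.factorial_pos
  linarith

lemma nu_mem : nu n ∈ nuSet n := Nat.sInf_mem ⟨_, max_mem_nuSet⟩

lemma nu_le_max : nu n ≤ max n 1 := Nat.sInf_le max_mem_nuSet

lemma half_lt_alpha : (1:ℝ)/2 < Real.exp (-1/2) := by
  have := Real.add_one_lt_exp (x := (-1:ℝ)/2) (by norm_num)
  linarith

lemma alpha_mul_exp_half : Real.exp (-1/2) * Real.exp (1/2) = 1 := by
  rw [← Real.exp_add]; norm_num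

lemma nu_upper (hn : 2 ≤ n) : (nu n : ℝ) ≤ Real.exp (-1/2) * n + 1 := by
  set α := Real.exp (-1/2) with hα
  set K := ⌈α * n⌉₊ with hKdef
  have hαpos : (0:ℝ) < α := Real.exp_pos _
  have hn0 : (0:ℝ) < n := by exact_mod_cast Nat.lt_of_lt_of_le Nat.zero_lt_two hn
  have hαn : (0:ℝ) < α * n := by positivity
  have hK1 : 1 ≤ K := Nat.one_le_ceil_iff.2 hαn
  have hKα : α * n ≤ K := Nat.le_ceil _
  have hn2K : n ≤ 2*K+1 := by
    have h2 : (n:ℝ) < 2 * K := by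
      have := half_lt_alpha
      nlinarith
    have : n < 2 * K := by exact_mod_cast h2
    omega
  have hmem : K ∈ nuSet n := by
    refine (P_iff hK1 hn2K).2 ?_
    rcases le_or_gt n K with h | h
    · rw [Finset.Ioc_eq_empty (by omega)]
      norm_num
    · have hcast : ((∑ m ∈ Finset.Ioc K n, (1:ℚ)/m : ℚ) : ℝ)
          = ∑ m ∈ Finset.Ioc K n, (1:ℝ)/m := by
        push_cast
        rfl
      have hup := harm_upper hK1 (le_of_lt h)
      have hlog : Real.log n - Real.log K ≤ 1/2 := by
        have hKexp : (n:ℝ) ≤ K * Real.exp (1/2) := by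
          have h3 : α * n * Real.exp (1/2) ≤ K * Real.exp (1/2) :=
            mul_le_mul_of_nonneg_right hKα (le_of_lt (Real.exp_pos _))
          have h4 : α * n * Real.exp (1/2) = n * (α * Real.exp (1/2)) := by ring
          rw [h4, alpha_mul_exp_half, mul_one] at h3
          exact h3
        have hK0 : (0:ℝ) < K := by exact_mod_cast hK1
        have := Real.log_le_log (by positivity) hKexp
        rw [Real.log_mul (by positivity) (by positivity), Real.log_exp] at this
        linarith
      have hfin : ((∑ m ∈ Finset.Ioc K n, (1:ℚ)/m : ℚ) : ℝ) ≤ (((1:ℚ)/2 : ℚ) : ℝ) := by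
        push_cast
        linarith
      exact_mod_cast hfin
  have hnuK : nu n ≤ K := Nat.sInf_le hmem
  have hceil : (K:ℝ) < α * n + 1 := Nat.ceil_lt_add_one (le_of_lt hαn)
  have : (nu n : ℝ) ≤ K := by exact_mod_cast hnuK
  linarith

lemma nu_lower (hn : 40 ≤ n) : Real.exp (-1/2) * n - 1 ≤ (nu n : ℝ) := by
  set α := Real.exp (-1/2) with hα
  set L := 11*n/20 with hLdef
  have hL1 : 1 ≤ L := by omega
  have hLn : n ≤ 2*L+1 := by omega
  have hLlt : L < n := by omega
  have hn0 : (0:ℝ) < n := by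
    have : (0:ℕ) < n := by omega
    exact_mod_cast this
  have hLreal : (L:ℝ) ≤ 0.55 * n := by
    have h20 : L * 20 ≤ 11 * n := by omega
    have hcast : (L:ℝ) * 20 ≤ 11 * n := by exact_mod_cast h20
    linarith
  have hnotP : L ∉ nuSet n := by
    rw [P_iff hL1 hLn]
    intro hcon
    have hconR : ∑ m ∈ Finset.Ioc L n, (1:ℝ)/m ≤ 1/2 := by
      have h5 : ((∑ m ∈ Finset.Ioc L n, (1:ℚ)/m : ℚ):ℝ) ≤ (((1:ℚ)/2:ℚ):ℝ) := by
        exact_mod_cast hcon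
      push_cast at h5
      linarith
    have hlow := harm_lower hL1 hLlt.le
    have hkey : ((L:ℝ)+1) * Real.exp (1/2) < (n:ℝ)+1 := by
      have he := exp_half_lt
      have hLpos : (0:ℝ) < (L:ℝ)+1 := by positivity
      have h1 : ((L:ℝ)+1) * Real.exp (1/2) < ((L:ℝ)+1) * 1.65 :=
        mul_lt_mul_of_pos_left he hLpos
      have hn40 : (40:ℝ) ≤ n := by exact_mod_cast hn
      nlinarith
    have hloglt : 1/2 < Real.log (n+1) - Real.log (L+1) := by
      have hlt := Real.log_lt_log (by positivity) hkey
      rw [Real.log_mul (by positivity) (Real.exp_ne_zero _), Real.log_exp] at hlt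
      linarith
    linarith
  have hgt : L < nu n := by
    by_contra hcon
    push_neg at hcon
    exact hnotP (count_mono hcon nu_mem hL1)
  have hk1 : 1 ≤ nu n := nu_mem.1
  have hkn : nu n ≤ n :=
    le_trans nu_le_max (le_of_eq (max_eq_left (by omega)))
  have hk2 : n ≤ 2*(nu n)+1 := by omega
  have hS := (P_iff hk1 hk2).1 nu_mem
  have hSR : ∑ m ∈ Finset.Ioc (nu n) n, (1:ℝ)/m ≤ 1/2 := by
    have h5 : ((∑ m ∈ Finset.Ioc (nu n) n, (1:ℚ)/m : ℚ):ℝ) ≤ (((1:ℚ)/2:ℚ):ℝ) := by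
      exact_mod_cast hS
    push_cast at h5
    linarith
  have hlow := harm_lower hk1 hkn
  have hexp : (n:ℝ)+1 ≤ (((nu n):ℝ)+1) * Real.exp (1/2) := by
    by_contra hcon
    push_neg at hcon
    have hlt := Real.log_lt_log (by positivity) hcon
    rw [Real.log_mul (by positivity) (Real.exp_ne_zero _), Real.log_exp] at hlt
    linarith
  have hmul := mul_le_mul_of_nonneg_left hexp (le_of_lt (Real.exp_pos (-1/2)))
  have hsimp : Real.exp (-1/2) * ((((nu n):ℝ)+1) * Real.exp (1/2)) = ((nu n):ℝ)+1 := by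
    rw [show Real.exp (-1/2) * ((((nu n):ℝ)+1) * Real.exp (1/2))
        = (((nu n):ℝ)+1) * (Real.exp (-1/2) * Real.exp (1/2)) by ring,
      alpha_mul_exp_half, mul_one]
  rw [hsimp] at hmul
  have hαpos : (0:ℝ) < Real.exp (-1/2) := Real.exp_pos _
  rw [hα]
  nlinarith

end NuAnalysis

theorem stmt6 :
    Filter.Tendsto (fun n : ℕ => (nu n : ℝ) / n) Filter.atTop
      (nhds (Real.exp (-1/2))) := by
  have hlim1 : Filter.Tendsto (fun n : ℕ => Real.exp (-1/2) - 1/(n:ℝ)) Filter.atTop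
      (nhds (Real.exp (-1/2))) := by
    simpa using
      (tendsto_const_nhds (x := Real.exp (-1/2)) (f := Filter.atTop (α := ℕ))).sub
        tendsto_one_div_atTop_nhds_zero_nat
  have hlim2 : Filter.Tendsto (fun n : ℕ => Real.exp (-1/2) + 1/(n:ℝ)) Filter.atTop
      (nhds (Real.exp (-1/2))) := by
    simpa using
      (tendsto_const_nhds (x := Real.exp (-1/2)) (f := Filter.atTop (α := ℕ))).add
        tendsto_one_div_atTop_nhds_zero_nat
  refine tendsto_of_tendsto_of_tendsto_of_le_of_le' hlim1 hlim2 ?_ ?_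
  · filter_upwards [Filter.eventually_ge_atTop 40] with n hn
    have h := nu_lower hn
    have hn0 : (0:ℝ) < n := by
      have : (0:ℕ) < n := by omega
      exact_mod_cast this
    have heq : Real.exp (-1/2) - 1/(n:ℝ) = (Real.exp (-1/2) * n - 1)/n := by
      field_simp
    rw [heq]
    gcongr
  · filter_upwards [Filter.eventually_ge_atTop 40] with n hn
    have h := nu_upper (n := n) (by omega)
    have hn0 : (0:ℝ) < n := by
      have : (0:ℕ) < n := by omega
      exact_mod_cast this
    have heq : Real.exp (-1/2) + 1/(n:ℝ) = (Real.exp (-1/2) * n + 1)/n := by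
      field_simp
    rw [heq]
    gcongr
end

section
/- Let s(σ) denote the length of the shortest cycle of a permutation σ, let D_n be the set of derangements of {1,…,n}, and d_n = |D_n|. Assume that (1/(n!·ln n)) · Σ_{σ ∈ S_n} s(σ) converges to e^{−γ} as n → ∞. Then (1/(d_n·ln n)) · Σ_{σ ∈ D_n} s(σ) converges to e^{1−γ} as n → ∞. -/
/-- The length of the shortest cycle of a permutation `σ` of `Fin n`
(orbit size of `x` equals the minimal period of `σ` at `x`; fixed points
count as cycles of length `1`). -/
noncomputable def minCycleLen {n : ℕ} (σ : Equiv.Perm (Fin n)) : ℕ :=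
  sInf (Set.range fun x : Fin n => Function.minimalPeriod σ x)

/-- The set of derangements of `{1,…,n}`, as a finset of permutations. -/
noncomputable def derangementsFinset (n : ℕ) : Finset (Equiv.Perm (Fin n)) :=
  Finset.univ.filter fun σ : Equiv.Perm (Fin n) => ∀ x, σ x ≠ x

open Filter Real
open scoped Topology

lemma minimalPeriod_perm_pos {n : ℕ} (σ : Equiv.Perm (Fin n)) (y : Fin n) :
    0 < Function.minimalPeriod σ y := by
  apply Function.IsPeriodicPt.minimalPeriod_pos (orderOf_pos σ)
  show (⇑σ)^[orderOf σ] y = y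
  rw [Equiv.Perm.iterate_eq_pow, pow_orderOf_eq_one]
  rfl

lemma minCycleLen_eq_one {n : ℕ} {σ : Equiv.Perm (Fin n)} (x : Fin n) (hx : σ x = x) :
    minCycleLen σ = 1 := by
  have h1 : Function.minimalPeriod σ x = 1 :=
    Function.minimalPeriod_eq_one_iff_isFixedPt.mpr hx
  refine le_antisymm (Nat.sInf_le ⟨x, h1⟩) ?_
  rw [Nat.one_le_iff_ne_zero]
  intro h0
  rcases Nat.sInf_eq_zero.mp h0 with h | h
  · obtain ⟨y, hy⟩ := h
    exact (minimalPeriod_perm_pos σ y).ne' (by simpa using hy)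
  · exact absurd h (Set.nonempty_iff_ne_empty.mp ⟨_, ⟨x, rfl⟩⟩)

lemma card_derangementsFinset (n : ℕ) :
    (derangementsFinset n).card = numDerangements n := by
  rw [← card_derangements_fin_eq_numDerangements (n := n), ← Set.toFinset_card]
  congr 1
  ext σ
  simp [derangements, derangementsFinset]
  exact Iff.symm (@Set.mem_toFinset _ _ (_) σ)

lemma sum_split (n : ℕ) :
    ∑ σ : Equiv.Perm (Fin n), (minCycleLen σ : ℝ)
      = (∑ σ ∈ derangementsFinset n, (minCycleLen σ : ℝ))
        + ((n.factorial : ℝ) - (derangementsFinset n).card) := by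
  classical
  have hsplit := Finset.sum_filter_add_sum_filter_not Finset.univ
    (fun σ : Equiv.Perm (Fin n) => ∀ x, σ x ≠ x) (fun σ => (minCycleLen σ : ℝ))
  have h2 : ∑ σ ∈ Finset.univ.filter
      (fun σ : Equiv.Perm (Fin n) => ¬ ∀ x, σ x ≠ x), (minCycleLen σ : ℝ)
      = (Finset.univ.filter (fun σ : Equiv.Perm (Fin n) => ¬ ∀ x, σ x ≠ x)).card := by
    have hone : ∀ σ ∈ Finset.univ.filter
        (fun σ : Equiv.Perm (Fin n) => ¬ ∀ x, σ x ≠ x), (minCycleLen σ : ℝ) = 1 := by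
      intro σ hσ
      simp only [Finset.mem_filter] at hσ
      push_neg at hσ
      obtain ⟨x, hx⟩ := hσ.2
      rw [minCycleLen_eq_one x hx]; norm_num
    rw [Finset.sum_congr rfl hone, Finset.sum_const, nsmul_eq_mul, mul_one]
  have hcard := Finset.card_filter_add_card_filter_not
    (s := (Finset.univ : Finset (Equiv.Perm (Fin n))))
    (p := fun σ : Equiv.Perm (Fin n) => ∀ x, σ x ≠ x)
  rw [Finset.card_univ, Fintype.card_perm, Fintype.card_fin] at hcard
  rw [← hsplit]
  have : ((Finset.univ.filter (fun σ : Equiv.Perm (Fin n) => ¬ ∀ x, σ x ≠ x)).card : ℝ)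
      = (n.factorial : ℝ) - (derangementsFinset n).card := by
    have : (derangementsFinset n).card
        + (Finset.univ.filter (fun σ : Equiv.Perm (Fin n) => ¬ ∀ x, σ x ≠ x)).card
        = n.factorial := hcard
    push_cast [← this]
    ring
  rw [h2, this]
  rfl

theorem stmt11
    (h : Filter.Tendsto
      (fun n : ℕ =>
        (∑ σ : Equiv.Perm (Fin n), (minCycleLen σ : ℝ)) / (n.factorial * Real.log n))
      Filter.atTop (nhds (Real.exp (-Real.eulerMascheroniConstant)))) :
    Filter.Tendsto
      (fun n : ℕ =>
        (∑ σ ∈ derangementsFinset n, (minCycleLen σ : ℝ)) /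
          ((derangementsFinset n).card * Real.log n))
      Filter.atTop (nhds (Real.exp (1 - Real.eulerMascheroniConstant))) := by
  set D : ℕ → ℝ := fun n => ((derangementsFinset n).card : ℝ) with hD
  have hDnd : ∀ n, D n = (numDerangements n : ℝ) := by
    intro n; simp [hD, card_derangementsFinset]
  -- D n / n! → exp (-1)
  have hinv : Tendsto (fun n => D n / n.factorial) atTop (𝓝 (Real.exp (-1))) := by
    simpa [hDnd] using numDerangements_tendsto_inv_e
  -- n! / D n → exp 1
  have hFD : Tendsto (fun n => (n.factorial : ℝ) / D n) atTop (𝓝 (Real.exp 1)) := by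
    have := hinv.inv₀ (by positivity)
    simpa [inv_div, Real.exp_neg] using this
  -- eventually D n > 0
  have hDpos : ∀ᶠ n : ℕ in atTop, 0 < D n := by
    have h1 : ∀ᶠ n : ℕ in atTop, 0 < D n / n.factorial :=
      hinv.eventually (eventually_gt_nhds (by positivity))
    filter_upwards [h1] with n hn
    have hf : (0:ℝ) < n.factorial := by positivity
    have := mul_pos hn hf
    rwa [div_mul_cancel₀ _ hf.ne'] at this
  have hLpos : ∀ᶠ n : ℕ in atTop, 0 < Real.log n := by
    filter_upwards [eventually_ge_atTop 2] with n hn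
    exact Real.log_pos (by exact_mod_cast hn)
  -- 1/log n → 0
  have hL : Tendsto (fun n : ℕ => (Real.log n)⁻¹) atTop (𝓝 0) :=
    (Real.tendsto_log_atTop.comp tendsto_natCast_atTop_atTop).inv_tendsto_atTop
  have hlim : Tendsto (fun n : ℕ =>
      ((n.factorial : ℝ) / D n) *
        ((∑ σ : Equiv.Perm (Fin n), (minCycleLen σ : ℝ)) / (n.factorial * Real.log n))
      - ((n.factorial : ℝ) / D n - 1) * (Real.log n)⁻¹) atTop
      (𝓝 (Real.exp (1 - Real.eulerMascheroniConstant))) := by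
    have := (hFD.mul h).sub ((hFD.sub (tendsto_const_nhds (x := (1:ℝ)))).mul hL)
    simpa [← Real.exp_add, sub_eq_add_neg] using this
  refine hlim.congr' ?_
  filter_upwards [hDpos, hLpos] with n hDn hLn
  have hF : (0:ℝ) < n.factorial := by positivity
  have hB := sum_split n
  rw [hB]
  simp only [hD] at hDn ⊢
  field_simp
  ring
end

section
/- Let c_n = n! · Σ_{j=1}^{n} n^{n−j−1} / (n−j)! (the number of connected mappings of an n-element set to itself). Then √n · c_n / n^n converges to √(π/2) as n → ∞. -/
/-- `c n = n! · Σ_{j=1}^{n} n^{n−j−1} / (n−j)!`, the number of connected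
mappings of an `n`-element set to itself. -/
noncomputable def connectedMappingCount (n : ℕ) : ℝ :=
  (n.factorial : ℝ) *
    ∑ j ∈ Finset.Icc 1 n, (n : ℝ) ^ ((n : ℤ) - j - 1) / ((n - j).factorial : ℝ)

open Finset Filter MeasureTheory Real Set

noncomputable def bb (n j : ℕ) : ℝ := ∏ i ∈ Finset.range j, (1 - (i:ℝ)/n)

lemma bb_eq_factorial (n : ℕ) (hn : 0 < n) : ∀ j : ℕ, j ≤ n →
    (n.factorial : ℝ) / (((n-j).factorial : ℝ) * (n:ℝ)^j) = bb n j := by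
  intro j
  induction j with
  | zero =>
    intro _
    have : (n.factorial : ℝ) ≠ 0 := by positivity
    simp [bb, div_self this]
  | succ k ih =>
    intro hk
    have hk' : k ≤ n := by omega
    have h1 : (n - k : ℕ) = (n - (k+1)) + 1 := by omega
    have hfac : ((n-k).factorial : ℝ) = (n - (k+1)).factorial * ((n:ℝ) - k) := by
      rw [h1, Nat.factorial_succ]
      push_cast [Nat.cast_sub (show n - (k+1) + 1 ≤ n by omega)]
      rw [Nat.cast_sub (by omega : k + 1 ≤ n)]
      push_cast
      ring
    have hne : ((n - (k+1)).factorial : ℝ) ≠ 0 := by positivity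
    have hnk : (n:ℝ) - k ≠ 0 := by
      have : (k:ℝ) < n := by exact_mod_cast by omega
      linarith
    have hnn : (n:ℝ) ≠ 0 := by positivity
    have := ih hk'
    rw [bb, Finset.prod_range_succ, ← bb, ← this]
    have hfk : ((n-k).factorial : ℝ) ≠ 0 := by positivity
    field_simp [hfac]
    rw [hfac]
    ring

lemma factor_nonneg {n i : ℕ} (h : i < n) : 0 ≤ 1 - (i:ℝ)/n := by
  have hn : (0:ℝ) < n := by exact_mod_cast (by omega : 0 < n)
  have : (i:ℝ)/n ≤ 1 := by
    rw [div_le_one hn]; exact_mod_cast h.le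
  linarith

lemma bb_nonneg {n j : ℕ} (h : j ≤ n) : 0 ≤ bb n j :=
  Finset.prod_nonneg fun i hi => factor_nonneg (lt_of_lt_of_le (Finset.mem_range.mp hi) h)

lemma bb_pos {n j : ℕ} (h : j ≤ n) : 0 < bb n j := by
  apply Finset.prod_pos
  intro i hi
  have hi' : i < n := lt_of_lt_of_le (Finset.mem_range.mp hi) h
  have hn : (0:ℝ) < n := by exact_mod_cast (by omega : 0 < n)
  have : (i:ℝ)/n < 1 := by
    rw [div_lt_one hn]; exact_mod_cast hi'
  linarith

lemma bb_le_exp {n j : ℕ} (h : j ≤ n) :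
    bb n j ≤ Real.exp (-(∑ i ∈ Finset.range j, (i:ℝ)/n)) := by
  rw [show -(∑ i ∈ Finset.range j, (i:ℝ)/n) = ∑ i ∈ Finset.range j, (-((i:ℝ)/n)) by
    rw [← Finset.sum_neg_distrib], Real.exp_sum]
  apply Finset.prod_le_prod
  · intro i hi; exact factor_nonneg (lt_of_lt_of_le (Finset.mem_range.mp hi) h)
  · intro i hi
    have := Real.add_one_le_exp (-((i:ℝ)/n))
    linarith

lemma exp_le_one_sub {t : ℝ} (h0 : 0 ≤ t) (h2 : t ≤ 1/2) :
    Real.exp (-(t + 2*t^2)) ≤ 1 - t := by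
  set s := t + 2*t^2 with hsdef
  have hs0 : 0 ≤ s := by positivity
  have h1 : 1 + s/2 ≤ Real.exp (s/2) := by
    have := Real.add_one_le_exp (s/2); linarith
  have hb : (0:ℝ) ≤ 1 + s/2 := by linarith
  have h2' : (1 + s/2)^2 ≤ Real.exp s := by
    calc (1 + s/2)^2 ≤ (Real.exp (s/2))^2 := by
          apply pow_le_pow_left₀ hb h1
      _ = Real.exp s := by
          rw [sq, ← Real.exp_add]; ring_nf
  have hmono : (1-t) * (1+s/2)^2 ≤ (1-t) * Real.exp s :=
    mul_le_mul_of_nonneg_left h2' (by linarith)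
  have hpoly : 1 ≤ (1-t) * (1+s/2)^2 := by
    rw [hsdef]
    nlinarith [sq_nonneg t, mul_nonneg (mul_nonneg h0 h0) (by linarith : (0:ℝ) ≤ 1-2*t), sq_nonneg (t+2*t^2)]
  have key : 1 ≤ (1-t) * Real.exp s := le_trans hpoly hmono
  rw [Real.exp_neg]
  rw [inv_le_iff_one_le_mul₀ (Real.exp_pos s)]
  linarith [key]

lemma exp_le_bb {n j : ℕ} (hn : 0 < n) (h : j ≤ n) (hhalf : (j:ℝ) ≤ (n:ℝ)/2 + 1) :
    Real.exp (-(∑ i ∈ Finset.range j, ((i:ℝ)/n + 2*((i:ℝ)/n)^2))) ≤ bb n j := by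
  rw [show -(∑ i ∈ Finset.range j, ((i:ℝ)/n + 2*((i:ℝ)/n)^2))
      = ∑ i ∈ Finset.range j, (-(((i:ℝ)/n) + 2*((i:ℝ)/n)^2)) by
    rw [← Finset.sum_neg_distrib], Real.exp_sum]
  apply Finset.prod_le_prod
  · intro i hi; exact (Real.exp_pos _).le
  · intro i hi
    have hi' : (i:ℝ) < j := by exact_mod_cast Finset.mem_range.mp hi
    have hnR : (0:ℝ) < n := by exact_mod_cast hn
    apply exp_le_one_sub (by positivity)
    rw [div_le_iff₀ hnR]
    have hij : (i:ℝ) + 1 ≤ j := by exact_mod_cast Finset.mem_range.mp hi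
    linarith

lemma key_eq (n : ℕ) (hn : 1 ≤ n) :
    Real.sqrt n * connectedMappingCount n / (n:ℝ)^n
      = ∑ j ∈ Finset.Icc 1 n, bb n j / Real.sqrt n := by
  have hn0 : (0:ℝ) < n := by exact_mod_cast hn
  have hne : (n:ℝ) ≠ 0 := hn0.ne'
  have hs : (0:ℝ) < Real.sqrt n := Real.sqrt_pos.mpr hn0
  have hss : Real.sqrt n * Real.sqrt n = n := Real.mul_self_sqrt hn0.le
  rw [connectedMappingCount, Finset.mul_sum, Finset.mul_sum, Finset.sum_div]
  apply Finset.sum_congr rfl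
  intro j hj
  obtain ⟨hj1, hj2⟩ := Finset.mem_Icc.mp hj
  rw [← bb_eq_factorial n (by omega) j hj2]
  have hz : (n:ℝ) ^ ((n:ℤ) - j - 1) = (n:ℝ)^(n:ℕ) / ((n:ℝ)^(j:ℕ) * n) := by
    rw [show (n:ℤ) - j - 1 = (n:ℤ) - ((j:ℤ) + 1) by ring, zpow_sub₀ hne]
    rw [zpow_add₀ hne, zpow_natCast, zpow_natCast, zpow_one]
  rw [hz]
  have h1 : ((n-j).factorial : ℝ) ≠ 0 := by positivity
  have h2 : (n:ℝ)^(n:ℕ) ≠ 0 := by positivity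
  have h3 : (n:ℝ)^(j:ℕ) ≠ 0 := by positivity
  field_simp
  ring_nf
  rw [Real.sq_sqrt hn0.le]

noncomputable def gg (n : ℕ) (x : ℝ) : ℝ :=
  ∑ j ∈ Finset.Icc 1 n,
    Set.indicator (Set.Ioc (((j:ℝ)-1)/Real.sqrt n) ((j:ℝ)/Real.sqrt n)) (fun _ => bb n j) x

lemma gg_meas (n : ℕ) : Measurable (gg n) := by
  apply Finset.measurable_sum
  intro j _
  exact (measurable_const.indicator measurableSet_Ioc)

lemma gg_integrable_piece (n j : ℕ) (μ : Measure ℝ) [IsLocallyFiniteMeasure μ] :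
    Integrable (fun x => Set.indicator (Set.Ioc (((j:ℝ)-1)/Real.sqrt n) ((j:ℝ)/Real.sqrt n))
      (fun _ => bb n j) x) μ := by
  rw [MeasureTheory.integrable_indicator_iff measurableSet_Ioc]
  exact integrableOn_const measure_Ioc_lt_top.ne

lemma gg_integral (n : ℕ) (hn : 1 ≤ n) :
    ∫ x in Set.Ioi (0:ℝ), gg n x = ∑ j ∈ Finset.Icc 1 n, bb n j / Real.sqrt n := by
  have hs : (0:ℝ) < Real.sqrt n := Real.sqrt_pos.mpr (by exact_mod_cast hn)
  simp only [gg]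
  rw [MeasureTheory.integral_finset_sum _ (fun j _ => gg_integrable_piece n j _)]
  apply Finset.sum_congr rfl
  intro j hj
  obtain ⟨hj1, _⟩ := Finset.mem_Icc.mp hj
  have hsub : Set.Ioc (((j:ℝ)-1)/Real.sqrt n) ((j:ℝ)/Real.sqrt n) ⊆ Set.Ioi (0:ℝ) := by
    intro x hx
    have h1 : (0:ℝ) ≤ ((j:ℝ)-1)/Real.sqrt n := by
      apply div_nonneg _ hs.le
      have : (1:ℝ) ≤ j := by exact_mod_cast hj1
      linarith
    exact lt_of_le_of_lt h1 hx.1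
  rw [MeasureTheory.integral_indicator_const _ measurableSet_Ioc,
    measureReal_def, Measure.restrict_apply measurableSet_Ioc,
    Set.inter_eq_left.mpr hsub, Real.volume_Ioc]
  have harea : (j:ℝ)/Real.sqrt n - ((j:ℝ)-1)/Real.sqrt n = 1/Real.sqrt n := by
    field_simp
    ring
  rw [harea, ENNReal.toReal_ofReal (by positivity), smul_eq_mul]
  ring

lemma gg_eq (n j : ℕ) (hn : 1 ≤ n) (hj : j ∈ Finset.Icc 1 n) (x : ℝ)
    (hx : x ∈ Set.Ioc (((j:ℝ)-1)/Real.sqrt n) ((j:ℝ)/Real.sqrt n)) : gg n x = bb n j := by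
  have hs : (0:ℝ) < Real.sqrt n := Real.sqrt_pos.mpr (by exact_mod_cast hn)
  rw [gg, Finset.sum_eq_single_of_mem j hj]
  · rw [Set.indicator_of_mem hx]
  · intro k hk hkj
    apply Set.indicator_of_notMem
    intro hxk
    apply hkj
    obtain ⟨hx1, hx2⟩ := hx
    obtain ⟨hk1, hk2⟩ := hxk
    have h1 : ((j:ℝ)-1)/Real.sqrt n < (k:ℝ)/Real.sqrt n := lt_of_lt_of_le hx1 hk2
    have h2 : ((k:ℝ)-1)/Real.sqrt n < (j:ℝ)/Real.sqrt n := lt_of_lt_of_le hk1 hx2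
    rw [div_lt_div_iff_of_pos_right hs] at h1 h2
    have : j = k := by
      have hjk : (j:ℝ) < (k:ℝ) + 1 := by linarith
      have hkj' : (k:ℝ) < (j:ℝ) + 1 := by linarith
      have : j < k + 1 := by exact_mod_cast hjk
      have : k < j + 1 := by exact_mod_cast hkj'
      omega
    exact this.symm

lemma sum_range_id_real (j : ℕ) :
    (∑ i ∈ Finset.range j, (i:ℝ)) = (j:ℝ) * ((j:ℝ) - 1) / 2 := by
  induction j with
  | zero => simp
  | succ k ih =>
    rw [Finset.sum_range_succ, ih]
    push_cast
    ring

lemma gg_nonneg (n : ℕ) (x : ℝ) : 0 ≤ gg n x := by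
  apply Finset.sum_nonneg
  intro j hj
  exact Set.indicator_nonneg (fun _ _ => bb_nonneg (Finset.mem_Icc.mp hj).2) x

lemma gg_bound (n : ℕ) (hn : 1 ≤ n) (x : ℝ) : |gg n x| ≤ Real.exp (-(x^2/2) + x) := by
  have hs : (0:ℝ) < Real.sqrt n := Real.sqrt_pos.mpr (by exact_mod_cast hn)
  have hs1 : (1:ℝ) ≤ Real.sqrt n := by
    rw [show (1:ℝ) = Real.sqrt 1 by simp]
    exact Real.sqrt_le_sqrt (by exact_mod_cast hn)
  have hss : Real.sqrt n * Real.sqrt n = n := Real.mul_self_sqrt (by positivity)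
  rw [abs_of_nonneg (gg_nonneg n x)]
  by_cases h : ∀ j ∈ Finset.Icc 1 n, x ∉ Set.Ioc (((j:ℝ)-1)/Real.sqrt n) ((j:ℝ)/Real.sqrt n)
  · have : gg n x = 0 := by
      rw [gg]
      apply Finset.sum_eq_zero
      intro j hj
      exact Set.indicator_of_notMem (h j hj) _
    rw [this]
    positivity
  · push_neg at h
    obtain ⟨j, hj, hx⟩ := h
    obtain ⟨hj1, hj2⟩ := Finset.mem_Icc.mp hj
    rw [gg_eq n j hn hj x hx]
    calc bb n j ≤ Real.exp (-(∑ i ∈ Finset.range j, (i:ℝ)/n)) := bb_le_exp hj2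
      _ ≤ Real.exp (-(x^2/2) + x) := by
          apply Real.exp_le_exp.mpr
          rw [← Finset.sum_div, sum_range_id_real]
          have hx2 : x ≤ (j:ℝ)/Real.sqrt n := hx.2
          have hx1 : 0 ≤ x := by
            have : (0:ℝ) ≤ ((j:ℝ)-1)/Real.sqrt n := by
              apply div_nonneg _ hs.le
              have : (1:ℝ) ≤ (j:ℝ) := by exact_mod_cast hj1
              linarith
            linarith [hx.1]
          have hsx : Real.sqrt n * x ≤ j := by
            rw [← le_div_iff₀' hs]; exact hx2
          have hj1' : (1:ℝ) ≤ (j:ℝ) := by exact_mod_cast hj1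
          have hnx : Real.sqrt n * x * (Real.sqrt n * x) = (n:ℝ) * x^2 := by
            rw [show Real.sqrt n * x * (Real.sqrt n * x) = (Real.sqrt n * Real.sqrt n) * x^2 by ring, hss]
          have hfac : 0 ≤ ((j:ℝ) - Real.sqrt n * x) * ((j:ℝ) + Real.sqrt n * x - 1) :=
            mul_nonneg (by linarith) (by nlinarith [mul_nonneg hs.le hx1])
          have hkey : (n:ℝ) * x^2 - Real.sqrt n * x ≤ (j:ℝ) * ((j:ℝ) - 1) := by
            nlinarith [hfac, hnx]
          have hnR : (0:ℝ) < n := by exact_mod_cast hn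
          have hsn : Real.sqrt n ≤ (n:ℝ) := by nlinarith [hss, hs1]
          rw [neg_le, neg_add, neg_neg]
          rw [div_div, le_div_iff₀ (by positivity : (0:ℝ) < 2*(n:ℝ))]
          nlinarith [hkey, mul_le_mul_of_nonneg_right hsn hx1]

lemma tendsto_sqrt_nat : Tendsto (fun n : ℕ => Real.sqrt n) atTop atTop := by
  apply tendsto_atTop_atTop.mpr
  intro b
  refine ⟨⌈b^2⌉₊, fun n hn => ?_⟩
  have h1 : (b^2 : ℝ) ≤ n := le_trans (Nat.le_ceil _) (by exact_mod_cast hn)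
  calc b ≤ |b| := le_abs_self b
    _ = Real.sqrt (b^2) := (Real.sqrt_sq_eq_abs b).symm
    _ ≤ Real.sqrt n := Real.sqrt_le_sqrt h1

lemma inv_sqrt_tendsto : Tendsto (fun n : ℕ => 1 / Real.sqrt n) atTop (nhds 0) := by
  simp only [one_div]
  exact tendsto_sqrt_nat.inv_tendsto_atTop

lemma gg_tendsto (x : ℝ) (hx : 0 < x) :
    Tendsto (fun n : ℕ => gg n x) atTop (nhds (Real.exp (-(x^2/2)))) := by
  set J : ℕ → ℕ := fun n => ⌈Real.sqrt n * x⌉₊ with hJ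
  -- eventual facts
  have hev : ∀ᶠ n : ℕ in atTop, 1 ≤ n ∧ Real.sqrt n * x ≤ n ∧ ((J n : ℝ) ≤ (n:ℝ)/2 + 1) := by
    have h1 : ∀ᶠ n : ℕ in atTop, (2*x + 2 : ℝ) ≤ Real.sqrt n :=
      tendsto_sqrt_nat.eventually_ge_atTop _
    filter_upwards [h1, eventually_ge_atTop 1] with n hsn hn1
    have hs0 : (0:ℝ) < Real.sqrt n := by linarith [hx]
    have hss : Real.sqrt n * Real.sqrt n = (n:ℝ) := Real.mul_self_sqrt (by positivity)
    refine ⟨hn1, ?_, ?_⟩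
    · nlinarith
    · have hceil : (J n : ℝ) < Real.sqrt n * x + 1 := Nat.ceil_lt_add_one (by positivity)
      nlinarith
  -- gg n x = bb n (J n) eventually
  have heq : ∀ᶠ n : ℕ in atTop, gg n x = bb n (J n) := by
    filter_upwards [hev] with n ⟨hn1, hn2, _⟩
    have hs0 : (0:ℝ) < Real.sqrt n := Real.sqrt_pos.mpr (by exact_mod_cast hn1)
    have hJ1 : 1 ≤ J n := Nat.ceil_pos.mpr (by positivity)
    have hJn : J n ≤ n := Nat.ceil_le.mpr (by exact_mod_cast hn2)
    have hmem : x ∈ Set.Ioc (((J n:ℝ)-1)/Real.sqrt n) ((J n:ℝ)/Real.sqrt n) := by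
      constructor
      · rw [div_lt_iff₀ hs0]
        have := Nat.ceil_lt_add_one (show (0:ℝ) ≤ Real.sqrt n * x by positivity)
        rw [mul_comm x (Real.sqrt n)]
        linarith [this]
      · rw [le_div_iff₀ hs0]
        rw [mul_comm x (Real.sqrt n)]
        exact Nat.le_ceil _
    exact gg_eq n (J n) hn1 (Finset.mem_Icc.mpr ⟨hJ1, hJn⟩) x hmem
  -- J n / sqrt n → x
  have hun : Tendsto (fun n : ℕ => (J n : ℝ)/Real.sqrt n) atTop (nhds x) := by
    apply tendsto_of_tendsto_of_tendsto_of_le_of_le'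
      (tendsto_const_nhds : Tendsto (fun _ : ℕ => x) atTop (nhds x))
      (by simpa using tendsto_const_nhds.add inv_sqrt_tendsto :
        Tendsto (fun n : ℕ => x + 1/Real.sqrt n) atTop (nhds x))
    · filter_upwards [eventually_ge_atTop 1] with n hn1
      have hs0 : (0:ℝ) < Real.sqrt n := Real.sqrt_pos.mpr (by exact_mod_cast hn1)
      rw [le_div_iff₀ hs0, mul_comm x (Real.sqrt n)]
      exact Nat.le_ceil _
    · filter_upwards [eventually_ge_atTop 1] with n hn1
      have hs0 : (0:ℝ) < Real.sqrt n := Real.sqrt_pos.mpr (by exact_mod_cast hn1)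
      rw [div_le_iff₀ hs0]
      have := Nat.ceil_lt_add_one (show (0:ℝ) ≤ Real.sqrt n * x by positivity)
      have h2 : (x + 1/Real.sqrt n) * Real.sqrt n = Real.sqrt n * x + 1 := by
        field_simp
      rw [h2]
      linarith [this]
  -- S n → x^2/2
  set S : ℕ → ℝ := fun n => ∑ i ∈ Finset.range (J n), (i:ℝ)/(n:ℝ) with hS
  have hStendsto : Tendsto S atTop (nhds (x^2/2)) := by
    have hform : ∀ᶠ n : ℕ in atTop,
        S n = ((J n : ℝ)/Real.sqrt n) * ((J n : ℝ)/Real.sqrt n - 1/Real.sqrt n) / 2 := by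
      filter_upwards [eventually_ge_atTop 1] with n hn1
      have hs0 : (0:ℝ) < Real.sqrt n := Real.sqrt_pos.mpr (by exact_mod_cast hn1)
      have hss : Real.sqrt n * Real.sqrt n = (n:ℝ) := Real.mul_self_sqrt (by positivity)
      rw [hS]
      simp only
      rw [← Finset.sum_div, sum_range_id_real, div_sub_div_same, div_mul_div_comm, hss,
        div_div, div_div, mul_comm (n:ℝ) 2]
    have hlim : Tendsto (fun n : ℕ => ((J n : ℝ)/Real.sqrt n) * ((J n : ℝ)/Real.sqrt n - 1/Real.sqrt n) / 2)
        atTop (nhds (x^2/2)) := by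
      have := (hun.mul (hun.sub inv_sqrt_tendsto)).div_const 2
      simpa [sub_zero, sq] using this
    exact Tendsto.congr' (hform.mono fun n h => h.symm) hlim
  -- E n → 0
  set E : ℕ → ℝ := fun n => ∑ i ∈ Finset.range (J n), 2*((i:ℝ)/(n:ℝ))^2 with hE
  have hEtendsto : Tendsto E atTop (nhds 0) := by
    apply tendsto_of_tendsto_of_tendsto_of_le_of_le'
      (tendsto_const_nhds : Tendsto (fun _ : ℕ => (0:ℝ)) atTop (nhds 0))
      (show Tendsto (fun n : ℕ => 2*((J n : ℝ)/Real.sqrt n)^3 * (1/Real.sqrt n)) atTop (nhds 0) by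
        have := ((hun.pow 3).const_mul 2).mul inv_sqrt_tendsto
        simpa using this)
    · filter_upwards with n
      apply Finset.sum_nonneg
      intro i _
      positivity
    · filter_upwards [eventually_ge_atTop 1] with n hn1
      have hs0 : (0:ℝ) < Real.sqrt n := Real.sqrt_pos.mpr (by exact_mod_cast hn1)
      have hss : Real.sqrt n * Real.sqrt n = (n:ℝ) := Real.mul_self_sqrt (by positivity)
      have hn0 : (0:ℝ) < n := by exact_mod_cast hn1
      have hterm : ∀ i ∈ Finset.range (J n), 2*((i:ℝ)/(n:ℝ))^2 ≤ 2*((J n:ℝ)/(n:ℝ))^2 := by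
        intro i hi
        have : (i:ℝ) ≤ (J n : ℝ) := by exact_mod_cast (Finset.mem_range.mp hi).le
        have hi0 : (0:ℝ) ≤ (i:ℝ) := by positivity
        gcongr
      calc E n ≤ (Finset.range (J n)).card • (2*((J n:ℝ)/(n:ℝ))^2) :=
            Finset.sum_le_card_nsmul _ _ _ hterm
        _ = (J n : ℝ) * (2*((J n:ℝ)/(n:ℝ))^2) := by
            rw [Finset.card_range, nsmul_eq_mul]
        _ = 2*((J n : ℝ)/Real.sqrt n)^3 * (1/Real.sqrt n) := by
            have h4 : Real.sqrt (n:ℝ) ^ 4 = (n:ℝ)^2 := by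
              rw [show Real.sqrt (n:ℝ) ^ 4 = (Real.sqrt (n:ℝ) * Real.sqrt (n:ℝ))^2 by ring, hss]
            field_simp
            linear_combination ((J n:ℝ)^3) * h4
  -- squeeze bb
  have hlow : Tendsto (fun n : ℕ => Real.exp (-(S n + E n))) atTop (nhds (Real.exp (-(x^2/2)))) := by
    have h1 : Tendsto (fun n : ℕ => -(S n + E n)) atTop (nhds (-(x^2/2))) := by
      have := (hStendsto.add hEtendsto).neg
      simpa using this
    exact (Real.continuous_exp.tendsto _).comp h1
  have hhigh : Tendsto (fun n : ℕ => Real.exp (-(S n))) atTop (nhds (Real.exp (-(x^2/2)))) := by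
    exact (Real.continuous_exp.tendsto _).comp hStendsto.neg
  have hbb : Tendsto (fun n : ℕ => bb n (J n)) atTop (nhds (Real.exp (-(x^2/2)))) := by
    apply tendsto_of_tendsto_of_tendsto_of_le_of_le' hlow hhigh
    · filter_upwards [hev] with n ⟨hn1, hn2, hn3⟩
      have hJn : J n ≤ n := Nat.ceil_le.mpr (by
        have hs0 : (0:ℝ) < Real.sqrt n := Real.sqrt_pos.mpr (by exact_mod_cast hn1)
        exact_mod_cast hn2)
      have := exp_le_bb (show 0 < n by omega) hJn hn3
      rw [Finset.sum_add_distrib] at this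
      exact this
    · filter_upwards [hev] with n ⟨hn1, hn2, _⟩
      have hJn : J n ≤ n := Nat.ceil_le.mpr (by exact_mod_cast hn2)
      exact bb_le_exp hJn
  exact Tendsto.congr' (heq.mono fun n h => h.symm) hbb

lemma bound_integrable :
    Integrable (fun x : ℝ => Real.exp (-(x^2/2) + x)) (volume.restrict (Set.Ioi 0)) := by
  have h1 : Integrable (fun x : ℝ => Real.exp (-(1/2:ℝ) * x^2)) volume :=
    integrable_exp_neg_mul_sq (by norm_num)
  have h2 : Integrable (fun x : ℝ => Real.exp (-(1/2:ℝ) * (x-1)^2)) volume :=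
    h1.comp_sub_right 1
  have h3 : Integrable (fun x : ℝ => Real.exp (1/2:ℝ) * Real.exp (-(1/2:ℝ) * (x-1)^2)) volume :=
    h2.const_mul _
  have heq : (fun x : ℝ => Real.exp (-(x^2/2) + x))
      = fun x : ℝ => Real.exp (1/2:ℝ) * Real.exp (-(1/2:ℝ) * (x-1)^2) := by
    funext x
    rw [← Real.exp_add]
    congr 1
    ring
  rw [heq]
  exact h3.restrict

lemma gaussian_Ioi : ∫ x in Set.Ioi (0:ℝ), Real.exp (-(x^2/2)) = Real.sqrt (Real.pi/2) := by
  have h : ∫ x in Set.Ioi (0:ℝ), Real.exp (-(x^2/2))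
      = ∫ x in Set.Ioi (0:ℝ), Real.exp (-(1/2:ℝ) * x^2) := by
    congr 1
    funext x
    congr 1
    ring
  rw [h, integral_gaussian_Ioi]
  rw [show Real.pi / (1/2:ℝ) = 2^2 * (Real.pi/2) by ring]
  rw [Real.sqrt_mul (by positivity), Real.sqrt_sq (by norm_num : (0:ℝ) ≤ 2)]
  ring

theorem stmt16 :
    Filter.Tendsto
      (fun n : ℕ => Real.sqrt n * connectedMappingCount n / (n : ℝ) ^ n)
      Filter.atTop (nhds (Real.sqrt (Real.pi / 2))) := by
  have hDCT : Tendsto (fun n : ℕ => ∫ x in Set.Ioi (0:ℝ), gg n x) atTop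
      (nhds (∫ x in Set.Ioi (0:ℝ), Real.exp (-(x^2/2)))) := by
    apply MeasureTheory.tendsto_integral_filter_of_dominated_convergence
      (fun x => Real.exp (-(x^2/2) + x))
    · exact Filter.Eventually.of_forall fun n =>
        ((gg_meas n).aestronglyMeasurable).restrict
    · filter_upwards [eventually_ge_atTop 1] with n hn
      apply ae_of_all
      intro x
      rw [Real.norm_eq_abs]
      exact gg_bound n hn x
    · exact bound_integrable
    · rw [MeasureTheory.ae_restrict_iff' measurableSet_Ioi]
      exact ae_of_all _ fun x hx => gg_tendsto x hx
  rw [gaussian_Ioi] at hDCT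
  apply Tendsto.congr' _ hDCT
  filter_upwards [eventually_ge_atTop 1] with n hn
  rw [gg_integral n hn, key_eq n hn]
end

section
/- Let a > 0 and suppose ρ_a : [0,∞) → ℝ satisfies ρ_a(x) = 1 for 0 ≤ x < 1 and ρ_a(x) = 1 − a·∫_1^x ρ_a(t−1)·(t−1)^{a−1}/t^a dt for x ≥ 1. Assume further that ρ_a(x)/x → 0 as x → ∞ and that the integrals ∫_1^∞ ρ_a(x)/x² dx and ∫_0^∞ ρ_a(x)·x^{a−1}/(x+1)^{1+a} dx converge. Then a·∫_0^∞ ρ_a(x)·x^{a−1}/(x+1)^{1+a} dx = 1 − ∫_1^∞ ρ_a(x)/x² dx. -/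
open MeasureTheory

theorem stmt18 (a : ℝ) (ha : 0 < a) (ρ : ℝ → ℝ)
    (h1 : ∀ x : ℝ, 0 ≤ x → x < 1 → ρ x = 1)
    (h2 : ∀ x : ℝ, 1 ≤ x →
      ρ x = 1 - a * ∫ t in (1:ℝ)..x, ρ (t - 1) * (t - 1) ^ (a - 1) / t ^ a)
    (h3 : Filter.Tendsto (fun x : ℝ => ρ x / x) Filter.atTop (nhds 0))
    (h4 : IntegrableOn (fun x : ℝ => ρ x / x ^ 2) (Set.Ioi 1))
    (h5 : IntegrableOn (fun x : ℝ => ρ x * x ^ (a - 1) / (x + 1) ^ (1 + a)) (Set.Ioi 0)) :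
    a * ∫ x in Set.Ioi (0:ℝ), ρ x * x ^ (a - 1) / (x + 1) ^ (1 + a) =
      1 - ∫ x in Set.Ioi (1:ℝ), ρ x / x ^ 2 := by
  set h : ℝ → ℝ := fun t => ρ (t - 1) * (t - 1) ^ (a - 1) / t ^ (1 + a) with hhdef
  set g : ℝ → ℝ := fun t => t * h t with hgdef
  -- translation machinery
  have mp : MeasurePreserving (fun x : ℝ => x + 1) volume volume :=
    measurePreserving_add_right volume 1
  have emb : MeasurableEmbedding (fun x : ℝ => x + 1) :=
    measurableEmbedding_addRight 1
  have himg : (fun x : ℝ => x + 1) '' Set.Ioi 0 = Set.Ioi 1 := by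
    rw [Set.image_add_const_Ioi]; norm_num
  have hcomp : (h ∘ fun x : ℝ => x + 1)
      = fun x : ℝ => ρ x * x ^ (a - 1) / (x + 1) ^ (1 + a) := by
    funext x; simp [hhdef]
  have hInt : IntegrableOn h (Set.Ioi 1) := by
    rw [← himg, mp.integrableOn_image emb, hcomp]; exact h5
  have hIntEq : (∫ x in Set.Ioi (0:ℝ), ρ x * x ^ (a - 1) / (x + 1) ^ (1 + a))
      = ∫ t in Set.Ioi (1:ℝ), h t := by
    rw [← himg, mp.setIntegral_image_emb emb, ← hcomp]
    rfl
  -- key identity for each X ≥ 1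
  have KEY : ∀ X : ℝ, 1 ≤ X →
      (∫ x in (1:ℝ)..X, ρ x / x ^ 2) + a * (∫ t in (1:ℝ)..X, h t) + ρ X / X = 1 := by
    intro X hX
    have hX0 : (0:ℝ) < X := lt_of_lt_of_le one_pos hX
    have hIocX : IntegrableOn h (Set.Ioc 1 X) :=
      hInt.mono_set Set.Ioc_subset_Ioi_self
    -- g integrable on Ioc 1 X
    have hgIoc : IntegrableOn g (Set.Ioc 1 X) := by
      refine Integrable.mono' (hIocX.norm.const_mul X)
        (continuous_id.aestronglyMeasurable.mul hIocX.aestronglyMeasurable) ?_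
      refine ae_restrict_of_forall_mem measurableSet_Ioc fun t ht => ?_
      have ht0 : 0 < t := lt_trans one_pos ht.1
      simp only [hgdef, norm_mul, Real.norm_eq_abs]
      have : |t| ≤ X := by rw [abs_of_pos ht0]; exact ht.2
      calc |t| * |h t| ≤ X * |h t| := by
            exact mul_le_mul_of_nonneg_right this (abs_nonneg _)
        _ = X * ‖h t‖ := rfl
    have hgInt : IntervalIntegrable g volume 1 X := by
      rw [intervalIntegrable_iff_integrableOn_Ioc_of_le hX]; exact hgIoc
    -- rewrite ρ via g
    have hρ : ∀ x : ℝ, 1 ≤ x → x ≤ X → ρ x = 1 - a * ∫ t in (1:ℝ)..x, g t := by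
      intro x hx _
      rw [h2 x hx]
      congr 1
      congr 1
      refine intervalIntegral.integral_congr fun t ht => ?_
      rw [Set.uIcc_of_le hx] at ht
      have ht0 : (0:ℝ) < t := lt_of_lt_of_le one_pos ht.1
      simp only [hgdef, hhdef]
      rw [Real.rpow_add ht0, Real.rpow_one, mul_div_assoc',
        mul_div_mul_left _ _ (ne_of_gt ht0)]
    set G : ℝ → ℝ := fun x => ∫ t in (1:ℝ)..x, g t with hGdef
    -- FTC for 1/x^2
    have ftc : ∀ s : ℝ, 0 < s → s ≤ X → (∫ x in s..X, (x ^ 2 : ℝ)⁻¹) = s⁻¹ - X⁻¹ := by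
      intro s hs hsX
      have : ∀ x ∈ Set.uIcc s X, HasDerivAt (fun y : ℝ => -y⁻¹) ((x ^ 2)⁻¹) x := by
        intro x hx
        rw [Set.uIcc_of_le hsX] at hx
        have hx0 : x ≠ 0 := ne_of_gt (lt_of_lt_of_le hs hx.1)
        have := (hasDerivAt_inv hx0).neg; rw [neg_neg] at this; exact this
      have hci : IntervalIntegrable (fun x : ℝ => (x ^ 2 : ℝ)⁻¹) volume s X := by
        refine ContinuousOn.intervalIntegrable (fun x hx => ?_)
        rw [Set.uIcc_of_le hsX] at hx
        have hx0 : x ≠ 0 := ne_of_gt (lt_of_lt_of_le hs hx.1)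
        exact ((continuous_pow 2).continuousAt.continuousWithinAt).inv₀ (pow_ne_zero 2 hx0)
      have := intervalIntegral.integral_eq_sub_of_hasDerivAt this hci
      rw [this]; ring
    -- continuity of G
    have hGcont : ContinuousOn G (Set.Icc 1 X) := by
      have hIcc : IntegrableOn g (Set.uIcc 1 X) := by
        rw [Set.uIcc_of_le hX, integrableOn_Icc_iff_integrableOn_Ioc]
        exact hgIoc
      have := intervalIntegral.continuousOn_primitive_interval hIcc
      rwa [Set.uIcc_of_le hX] at this
    -- interval integrabilities
    have hρInt : IntervalIntegrable (fun x => ρ x / x ^ 2) volume 1 X := by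
      rw [intervalIntegrable_iff_integrableOn_Ioc_of_le hX]
      exact h4.mono_set Set.Ioc_subset_Ioi_self
    have hsq : IntervalIntegrable (fun x : ℝ => (x ^ 2 : ℝ)⁻¹) volume 1 X := by
      refine ContinuousOn.intervalIntegrable (fun x hx => ?_)
      rw [Set.uIcc_of_le hX] at hx
      have hx0 : x ≠ 0 := ne_of_gt (lt_of_lt_of_le one_pos hx.1)
      exact ((continuous_pow 2).continuousAt.continuousWithinAt).inv₀ (pow_ne_zero 2 hx0)
    have hGsq : IntervalIntegrable (fun x => G x / x ^ 2) volume 1 X := by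
      refine ContinuousOn.intervalIntegrable ?_
      rw [Set.uIcc_of_le hX]
      exact hGcont.div ((continuous_pow 2).continuousOn)
        (fun x hx => pow_ne_zero 2 (ne_of_gt (lt_of_lt_of_le one_pos hx.1)))
    have E1 : (∫ x in (1:ℝ)..X, ρ x / x ^ 2)
        = (∫ x in (1:ℝ)..X, (x ^ 2 : ℝ)⁻¹) - a * ∫ x in (1:ℝ)..X, G x / x ^ 2 := by
      rw [← intervalIntegral.integral_const_mul,
        ← intervalIntegral.integral_sub hsq (hGsq.const_mul a)]
      refine intervalIntegral.integral_congr fun x hx => ?_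
      rw [Set.uIcc_of_le hX] at hx
      have hx0 : (x:ℝ) ≠ 0 := ne_of_gt (lt_of_lt_of_le one_pos hx.1)
      rw [hρ x hx.1 hx.2]
      field_simp
      rfl
    -- Fubini on the triangle
    set μ := volume.restrict (Set.Ioc (1:ℝ) X) with hμ
    haveI : IsFiniteMeasure μ :=
      ⟨by rw [hμ, Measure.restrict_apply_univ]; exact measure_Ioc_lt_top⟩
    set F : ℝ → ℝ → ℝ := fun x t => if t ≤ x then g t / x ^ 2 else 0 with hF
    have hFm : AEStronglyMeasurable (Function.uncurry F) (μ.prod μ) := by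
      have hfe : Function.uncurry F
          = Set.indicator {z : ℝ × ℝ | z.2 ≤ z.1} (fun z => g z.2 / z.1 ^ 2) := by
        funext z
        by_cases hz : z.2 ≤ z.1 <;>
          simp [Function.uncurry, hF, hz, Set.indicator, Set.mem_setOf_eq]
      rw [hfe]
      refine AEStronglyMeasurable.indicator ?_
        (measurableSet_le measurable_snd measurable_fst)
      have hde : (fun z : ℝ × ℝ => g z.2 / z.1 ^ 2) = fun z => g z.2 * (z.1 ^ 2)⁻¹ := by
        funext z; rw [div_eq_mul_inv]
      rw [hde]
      exact (hgIoc.aestronglyMeasurable.comp_snd).mul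
        ((measurable_fst.pow_const 2).inv.aestronglyMeasurable)
    have hFint : Integrable (Function.uncurry F) (μ.prod μ) := by
      refine Integrable.mono' ((integrable_const (1:ℝ)).mul_prod hgIoc.norm) hFm ?_
      rw [hμ, Measure.prod_restrict]
      refine ae_restrict_of_forall_mem (measurableSet_Ioc.prod measurableSet_Ioc) ?_
      rintro ⟨x, t⟩ ⟨hx, ht⟩
      simp only [Function.uncurry, hF]
      split_ifs with hle
      · have hx1 : (1:ℝ) ≤ x := le_of_lt hx.1
        rw [norm_div]
        have h1 : (1:ℝ) ≤ ‖x ^ 2‖ := by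
          rw [Real.norm_eq_abs, abs_of_nonneg (by positivity)]
          exact one_le_pow₀ hx1
        calc ‖g t‖ / ‖x ^ 2‖ ≤ ‖g t‖ / 1 :=
              div_le_div_of_nonneg_left (norm_nonneg _) one_pos h1 |>.trans_eq rfl
          _ = 1 * ‖g t‖ := by ring
      · simp [norm_nonneg]
    have hswap := MeasureTheory.integral_integral_swap hFint
    have hL : (∫ x, (∫ t, F x t ∂μ) ∂μ) = ∫ x in (1:ℝ)..X, G x / x ^ 2 := by
      rw [intervalIntegral.integral_of_le hX, hμ]
      refine setIntegral_congr_fun measurableSet_Ioc fun x hx => ?_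
      have hfe : (fun t => F x t) = Set.indicator (Set.Iic x) (fun t => g t / x ^ 2) := by
        funext t
        by_cases h' : t ≤ x <;> simp [hF, h', Set.indicator, Set.mem_Iic]
      rw [hfe, integral_indicator measurableSet_Iic,
        Measure.restrict_restrict measurableSet_Iic]
      have hset : Set.Iic x ∩ Set.Ioc 1 X = Set.Ioc 1 x := by
        ext y
        simp only [Set.mem_inter_iff, Set.mem_Iic, Set.mem_Ioc]
        exact ⟨fun hy => ⟨hy.2.1, hy.1⟩, fun hy => ⟨hy.2, hy.1, le_trans hy.2 hx.2⟩⟩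
      rw [hset, integral_div, hGdef]
      simp only []
      rw [← intervalIntegral.integral_of_le (le_of_lt hx.1)]
    have hR : (∫ t, (∫ x, F x t ∂μ) ∂μ)
        = (∫ t in (1:ℝ)..X, h t) - X⁻¹ * (∫ t in (1:ℝ)..X, g t) := by
      have step : ∀ t ∈ Set.Ioc (1:ℝ) X, (∫ x, F x t ∂μ) = h t - X⁻¹ * g t := by
        intro t ht
        have ht0 : (0:ℝ) < t := lt_trans one_pos ht.1
        have hfe : (fun x => F x t) = Set.indicator (Set.Ici t) (fun x => g t / x ^ 2) := by
          funext x
          by_cases h' : t ≤ x <;> simp [hF, h', Set.indicator, Set.mem_Ici]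
        rw [hμ, hfe, integral_indicator measurableSet_Ici,
          Measure.restrict_restrict measurableSet_Ici]
        have hset : Set.Ici t ∩ Set.Ioc 1 X = Set.Icc t X := by
          ext y
          simp only [Set.mem_inter_iff, Set.mem_Ici, Set.mem_Ioc, Set.mem_Icc]
          exact ⟨fun hy => ⟨hy.1, hy.2.2⟩, fun hy => ⟨hy.1, lt_of_lt_of_le ht.1 hy.1, hy.2⟩⟩
        rw [hset, integral_Icc_eq_integral_Ioc,
          ← intervalIntegral.integral_of_le ht.2]
        simp_rw [div_eq_mul_inv]
        rw [intervalIntegral.integral_const_mul, ftc t ht0 ht.2]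
        have hgt : g t * t⁻¹ = h t := by
          rw [hgdef]
          field_simp
        rw [mul_sub, hgt]
        ring
      rw [hμ] at *
      rw [setIntegral_congr_fun measurableSet_Ioc step,
        integral_sub hIocX (hgIoc.const_mul X⁻¹),
        intervalIntegral.integral_of_le hX, intervalIntegral.integral_of_le hX,
        integral_const_mul]
    have E4 : (∫ x in (1:ℝ)..X, G x / x ^ 2)
        = (∫ t in (1:ℝ)..X, h t) - X⁻¹ * G X := by
      rw [← hL, hswap, hR, hGdef]
    have hρX : ρ X = 1 - a * G X := hρ X hX le_rfl
    rw [E1, E4, ftc 1 one_pos hX, hρX]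
    field_simp
    ring
  -- limits
  have T1 := MeasureTheory.intervalIntegral_tendsto_integral_Ioi 1 h4
    (Filter.tendsto_id (α := ℝ))
  have T2 := MeasureTheory.intervalIntegral_tendsto_integral_Ioi 1 hInt
    (Filter.tendsto_id (α := ℝ))
  have Tall : Filter.Tendsto
      (fun X : ℝ => (∫ x in (1:ℝ)..X, ρ x / x ^ 2) + a * (∫ t in (1:ℝ)..X, h t) + ρ X / X)
      Filter.atTop
      (nhds ((∫ x in Set.Ioi (1:ℝ), ρ x / x ^ 2) + a * (∫ t in Set.Ioi (1:ℝ), h t) + 0)) :=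
    (T1.add (T2.const_mul a)).add h3
  have heq : (∫ x in Set.Ioi (1:ℝ), ρ x / x ^ 2) + a * (∫ t in Set.Ioi (1:ℝ), h t) + 0 = 1 := by
    refine tendsto_nhds_unique Tall ?_
    refine Filter.Tendsto.congr' ?_ tendsto_const_nhds
    filter_upwards [Filter.eventually_ge_atTop (1:ℝ)] with X hX
    exact (KEY X hX).symm
  rw [hIntEq]
  linarith [heq]
end
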